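/- arXiv:2308.16904 — 5 statements merged into one kernel-verified Lean document; each statement's English description precedes it below -/
import Mathlib

section
/- Let A, E ∈ ℝ^{m×n}, let Ã := A + E with i-th row ã_i and let e_i denote the i-th row of E. Let x_LS ∈ ℝ^n, b := A x_LS, ε ∈ ℝ^m, and b̃ := b + ε. Fix an index i with ã_i ≠ 0 and, for x ∈ ℝ^n, set x' := x − ((⟨ã_i, x⟩ − b̃_i)/‖ã_i‖²) ã_i. Then ‖x' − x_LS‖² = ‖x − x_LS‖² − ⟨ã_i, x − x_LS⟩²/‖ã_i‖² + (⟨e_i, x_LS⟩ − ε_i)²/‖ã_i‖². -/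
open Matrix
open scoped RealInnerProductSpace

/-- The `i`-th row of a matrix, viewed as a vector in Euclidean space. -/
noncomputable def row {m n : ℕ} (M : Matrix (Fin m) (Fin n) ℝ) (i : Fin m) :
    EuclideanSpace ℝ (Fin n) :=
  (WithLp.equiv 2 (Fin n → ℝ)).symm (M i)

/-- Matrix-vector multiplication as a map between Euclidean spaces. -/
noncomputable def mulVecE {m n : ℕ} (M : Matrix (Fin m) (Fin n) ℝ)
    (x : EuclideanSpace ℝ (Fin n)) : EuclideanSpace ℝ (Fin m) :=
  Matrix.toEuclideanLin M x

/-- The Kaczmarz update of `x` for the system `M y = c`, using row `i`: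
`x ↦ x - ((⟨mᵢ, x⟩ - cᵢ)/‖mᵢ‖²) mᵢ`. -/
noncomputable def kaczmarz {m n : ℕ} (M : Matrix (Fin m) (Fin n) ℝ) (c : Fin m → ℝ) (i : Fin m)
    (x : EuclideanSpace ℝ (Fin n)) : EuclideanSpace ℝ (Fin n) :=
  x - ((⟪_root_.row M i, x⟫ - c i) / ‖_root_.row M i‖ ^ 2) • _root_.row M i

/-- Iterated Kaczmarz updates along the index sequence `is = (i₁, …, i_k)`,
applying row `i₁` first: `K_{i_k}(⋯ K_{i₁}(x₀) ⋯)`. -/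
noncomputable def kaczmarzIter {m n k : ℕ} (M : Matrix (Fin m) (Fin n) ℝ) (c : Fin m → ℝ)
    (is : Fin k → Fin m) (x0 : EuclideanSpace ℝ (Fin n)) : EuclideanSpace ℝ (Fin n) :=
  (List.ofFn is).foldl (fun x i => kaczmarz M c i x) x0

/-- The squared Frobenius norm `‖M‖_F² = Σ_{i,j} M_{ij}²`. -/
noncomputable def frobSq {m n : ℕ} (M : Matrix (Fin m) (Fin n) ℝ) : ℝ :=
  ∑ i, ∑ j, (M i j) ^ 2

/-- The row space `range(Mᵀ)` of a matrix, as a submodule of Euclidean space. -/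
noncomputable def rowSpace {m n : ℕ} (M : Matrix (Fin m) (Fin n) ℝ) :
    Submodule ℝ (EuclideanSpace ℝ (Fin n)) :=
  LinearMap.range (Matrix.toEuclideanLin Mᵀ)

/-- The spectral norm (operator 2-norm) of a matrix. -/
noncomputable def specNorm {m n : ℕ} (M : Matrix (Fin m) (Fin n) ℝ) : ℝ :=
  ‖LinearMap.toContinuousLinearMap (Matrix.toEuclideanLin M)‖

/-- One-step orthogonal error decomposition for the Kaczmarz update on the
doubly-noisy system `Ãx ≈ b̃`, where `Ã = A + E`, `b = A x_LS`, `b̃ = b + ε`. -/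
theorem kaczmarz_step_error_decomposition {m n : ℕ}
    (A E : Matrix (Fin m) (Fin n) ℝ)
    (xLS : EuclideanSpace ℝ (Fin n)) (ε : EuclideanSpace ℝ (Fin m))
    (i : Fin m) (hrow : _root_.row (A + E) i ≠ 0)
    (x : EuclideanSpace ℝ (Fin n)) :
    ‖kaczmarz (A + E) (fun j => mulVecE A xLS j + ε j) i x - xLS‖ ^ 2
      = ‖x - xLS‖ ^ 2
        - ⟪_root_.row (A + E) i, x - xLS⟫ ^ 2 / ‖_root_.row (A + E) i‖ ^ 2
        + (⟪_root_.row E i, xLS⟫ - ε i) ^ 2 / ‖_root_.row (A + E) i‖ ^ 2 := by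
    classical
  set a := _root_.row (A + E) i with ha
  have hN : ‖a‖ ^ 2 ≠ 0 := pow_ne_zero _ (norm_ne_zero_iff.mpr hrow)
  have hAi : mulVecE A xLS i = ⟪_root_.row A i, xLS⟫ := by
    simp [mulVecE, _root_.row, Matrix.toEuclideanLin_apply, Matrix.mulVec, dotProduct,
      PiLp.inner_apply, RCLike.inner_apply, WithLp.equiv_symm_apply, mul_comm]
  have hsplit : a = _root_.row A i + _root_.row E i := rfl
  have key : ⟪a, x⟫ - (mulVecE A xLS i + ε i)
      = ⟪a, x - xLS⟫ + (⟪_root_.row E i, xLS⟫ - ε i) := by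
    simp only [inner_sub_right, hAi, hsplit, inner_add_left]
    ring
  have hkz : kaczmarz (A + E) (fun j => mulVecE A xLS j + ε j) i x - xLS
      = (x - xLS) - (((⟪a, x - xLS⟫ + (⟪_root_.row E i, xLS⟫ - ε i)) / ‖a‖ ^ 2) • a) := by
    rw [kaczmarz]
    rw [← ha]
    rw [show ⟪a, x⟫ - (mulVecE A xLS i + ε i) = ⟪a, x - xLS⟫ + (⟪_root_.row E i, xLS⟫ - ε i)
      from key]
    abel
  rw [hkz]
  set s := ⟪a, x - xLS⟫ with hs
  set d := ⟪_root_.row E i, xLS⟫ - ε i with hd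
  set t := (s + d) / ‖a‖ ^ 2 with ht
  have hexp : ‖(x - xLS) - t • a‖ ^ 2
      = ‖x - xLS‖ ^ 2 - 2 * (t * s) + t ^ 2 * ‖a‖ ^ 2 := by
    rw [norm_sub_sq_real, inner_smul_right, norm_smul, mul_pow, real_inner_comm, ← hs]
    simp [abs_mul_abs_self, sq_abs]
  rw [hexp, ht]
  field_simp
  ring
end

section
/- Let A, E ∈ ℝ^{m×n}, Ã := A + E, and assume every row ã_i of Ã is nonzero. Let x_LS ∈ ℝ^n, b := A x_LS, ε ∈ ℝ^m, b̃ := b + ε, and set p_i := ‖ã_i‖²/‖Ã‖_F² and K_i(x) := x − ((⟨ã_i, x⟩ − b̃_i)/‖ã_i‖²) ã_i. Let σ > 0 satisfy ‖Ã z‖ ≥ σ‖z‖ for every z ∈ range(Ãᵀ). Then for every x ∈ ℝ^n with x − x_LS ∈ range(Ãᵀ), Σ_{i=1}^m p_i ‖K_i(x) − x_LS‖² ≤ (1 − σ²/‖Ã‖_F²) ‖x − x_LS‖² + ‖E x_LS − ε‖²/‖Ã‖_F². -/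
open Matrix
open scoped RealInnerProductSpace

lemma inner_row_eq {m n : ℕ} (M : Matrix (Fin m) (Fin n) ℝ) (i : Fin m)
    (y : EuclideanSpace ℝ (Fin n)) : ⟪_root_.row M i, y⟫ = mulVecE M y i := by
  simp [_root_.row, mulVecE, Matrix.toEuclideanLin_apply, PiLp.inner_apply, Matrix.mulVec,
    dotProduct, RCLike.inner_apply, mul_comm]

lemma normSq_euclid {k : ℕ} (v : EuclideanSpace ℝ (Fin k)) : ‖v‖^2 = ∑ i, (v i)^2 := by
  rw [← real_inner_self_eq_norm_sq, PiLp.inner_apply]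
  simp [RCLike.inner_apply, sq]

lemma frobSq_eq_sum_rowSq {m n : ℕ} (M : Matrix (Fin m) (Fin n) ℝ) :
    frobSq M = ∑ i, ‖_root_.row M i‖^2 := by
  unfold frobSq
  refine Finset.sum_congr rfl fun i _ => ?_
  rw [normSq_euclid]
  simp [_root_.row]

/-- One-step expected contraction bound for randomized Kaczmarz on the
doubly-noisy system `Ãx ≈ b̃`, where `Ã = A + E`, `b = A x_LS`, `b̃ = b + ε`,
and `σ > 0` is a lower bound for `Ã` on its row space. -/
theorem kaczmarz_expected_one_step_contraction {m n : ℕ}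
    (A E : Matrix (Fin m) (Fin n) ℝ)
    (hrow : ∀ i, _root_.row (A + E) i ≠ 0)
    (xLS : EuclideanSpace ℝ (Fin n)) (ε : EuclideanSpace ℝ (Fin m))
    (σ : ℝ) (hσ : 0 < σ)
    (hσA : ∀ z ∈ rowSpace (A + E), σ * ‖z‖ ≤ ‖mulVecE (A + E) z‖)
    (x : EuclideanSpace ℝ (Fin n)) (hx : x - xLS ∈ rowSpace (A + E)) :
    ∑ i, (‖_root_.row (A + E) i‖ ^ 2 / frobSq (A + E)) *
        ‖kaczmarz (A + E) (fun j => mulVecE A xLS j + ε j) i x - xLS‖ ^ 2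
      ≤ (1 - σ ^ 2 / frobSq (A + E)) * ‖x - xLS‖ ^ 2
        + ‖mulVecE E xLS - ε‖ ^ 2 / frobSq (A + E) := by
  rcases Nat.eq_zero_or_pos m with hm | hm
  · subst hm
    have hF : frobSq (A + E) = 0 := by simp [frobSq]
    simp only [hF, div_zero, sub_zero, one_mul, Finset.univ_eq_empty, Finset.sum_empty, add_zero]
    positivity
  -- notation
  set At := A + E with hAt
  set e := x - xLS with he
  set w : EuclideanSpace ℝ (Fin m) := mulVecE E xLS - ε with hw
  set F := frobSq At with hFdef
  have hFsum : F = ∑ i, ‖_root_.row At i‖^2 := frobSq_eq_sum_rowSq At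
  have hvpos : ∀ i, (0:ℝ) < ‖_root_.row At i‖^2 := fun i => by
    have h0 : (0:ℝ) < ‖_root_.row At i‖ := norm_pos_iff.2 (hrow i)
    positivity
  have hF : 0 < F := by
    rw [hFsum]
    exact Finset.sum_pos (fun i _ => hvpos i) (Finset.univ_nonempty_iff.2 ⟨⟨0, hm⟩⟩)
  set s : Fin m → ℝ := fun i => ⟪_root_.row At i, e⟫ with hs
  -- per-row identity
  have hstep : ∀ i, ‖kaczmarz At (fun j => mulVecE A xLS j + ε j) i x - xLS‖^2
      = ‖e‖^2 + ((w i)^2 - (s i)^2) / ‖_root_.row At i‖^2 := by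
    intro i
    have hres : ⟪_root_.row At i, x⟫ - (mulVecE A xLS i + ε i) = s i + w i := by
      have h1 : ⟪_root_.row At i, x⟫ = ⟪_root_.row At i, e⟫ + ⟪_root_.row At i, xLS⟫ := by
        rw [he, inner_sub_right]; ring
      have h2 : ⟪_root_.row At i, xLS⟫ = mulVecE A xLS i + mulVecE E xLS i := by
        rw [inner_row_eq]
        simp [mulVecE, hAt, Matrix.add_mulVec, Matrix.toEuclideanLin_apply]
      have h3 : w i = mulVecE E xLS i - ε i := by simp [hw]
      rw [h1, h2, h3]; ring
    have hk : kaczmarz At (fun j => mulVecE A xLS j + ε j) i x - xLS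
        = e - ((s i + w i) / ‖_root_.row At i‖^2) • _root_.row At i := by
      rw [kaczmarz, hres, he]
      abel
    rw [hk, norm_sub_sq_real, real_inner_smul_right, norm_smul]
    have hN := (hvpos i).ne'
    have : ⟪e, _root_.row At i⟫ = s i := real_inner_comm _ _
    rw [this]
    rw [Real.norm_eq_abs, mul_pow, sq_abs]
    field_simp
    ring
  -- rewrite the sum
  have hsum : ∑ i, (‖_root_.row At i‖ ^ 2 / F) *
        ‖kaczmarz At (fun j => mulVecE A xLS j + ε j) i x - xLS‖ ^ 2
      = ‖e‖^2 + (∑ i, (w i)^2 - ∑ i, (s i)^2) / F := by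
    have : ∀ i : Fin m, (‖_root_.row At i‖ ^ 2 / F) *
        ‖kaczmarz At (fun j => mulVecE A xLS j + ε j) i x - xLS‖ ^ 2
        = (‖_root_.row At i‖^2 * ‖e‖^2) / F + ((w i)^2 - (s i)^2) / F := by
      intro i
      rw [hstep i]
      have hN := (hvpos i).ne'
      have hN' : ‖_root_.row At i‖ ≠ 0 := norm_ne_zero_iff.2 (hrow i)
      field_simp
    rw [Finset.sum_congr rfl fun i _ => this i, Finset.sum_add_distrib,
      ← Finset.sum_div, ← Finset.sum_div, ← Finset.sum_mul, ← hFsum,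
      Finset.sum_sub_distrib]
    field_simp
  rw [hsum]
  -- norms as sums
  have hwsum : ∑ i, (w i)^2 = ‖w‖^2 := (normSq_euclid w).symm
  have hssum : ∑ i, (s i)^2 = ‖mulVecE At e‖^2 := by
    rw [normSq_euclid]
    exact Finset.sum_congr rfl fun i _ => by
      rw [show s i = mulVecE At e i from inner_row_eq At i e]
  rw [hwsum, hssum]
  -- key inequality
  have hkey : σ^2 * ‖e‖^2 ≤ ‖mulVecE At e‖^2 := by
    have h := hσA e hx
    have h2 : (σ * ‖e‖) * (σ * ‖e‖) ≤ ‖mulVecE At e‖ * ‖mulVecE At e‖ :=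
      mul_self_le_mul_self (by positivity) h
    nlinarith [h2]
  have hrhs : (1 - σ^2/F) * ‖e‖^2 + ‖w‖^2/F
      = ‖e‖^2 + (‖w‖^2 - σ^2 * ‖e‖^2) / F := by
    field_simp
    ring
  rw [hrhs]
  exact add_le_add le_rfl ((div_le_div_iff_of_pos_right hF).mpr (by linarith))
end

section
/- (Main theorem: RK on doubly-noisy systems, additive noise.) Let A, E ∈ ℝ^{m×n}, Ã := A + E with every row ã_i nonzero, let x_LS ∈ ℝ^n, b := A x_LS, ε ∈ ℝ^m, b̃ := b + ε, p_i := ‖ã_i‖²/‖Ã‖_F², and K_i(x) := x − ((⟨ã_i, x⟩ − b̃_i)/‖ã_i‖²) ã_i. Let σ > 0 satisfy ‖Ã z‖ ≥ σ‖z‖ for every z ∈ range(Ãᵀ). Let x_0 ∈ ℝ^n satisfy x_0 − x_LS ∈ range(Ãᵀ). Then for every k ≥ 0, Σ_{(i_1,…,i_k) ∈ {1,…,m}^k} p_{i_1}⋯p_{i_k} ‖K_{i_k}(⋯K_{i_1}(x_0)⋯) − x_LS‖² ≤ (1 − σ²/‖Ã‖_F²)^k ‖x_0 − x_LS‖² +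 ‖E x_LS − ε‖²/σ². -/
open Matrix
open scoped RealInnerProductSpace

namespace RKAux

variable {m n : ℕ}

lemma mulVecE_apply (M : Matrix (Fin m) (Fin n) ℝ) (x : EuclideanSpace ℝ (Fin n)) (i : Fin m) :
    mulVecE M x i = ∑ j, M i j * x j := rfl

lemma rowE_apply (M : Matrix (Fin m) (Fin n) ℝ) (i : Fin m) (j : Fin n) :
    _root_.row M i j = M i j := rfl

lemma norm_sq_eucl {N : ℕ} (x : EuclideanSpace ℝ (Fin N)) : ‖x‖^2 = ∑ i, (x i)^2 := by
  rw [PiLp.norm_sq_eq_of_L2]; simp [sq_abs]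

lemma inner_row (M : Matrix (Fin m) (Fin n) ℝ) (i : Fin m) (x : EuclideanSpace ℝ (Fin n)) :
    ⟪_root_.row M i, x⟫ = mulVecE M x i := by
  rw [mulVecE_apply]
  simp [PiLp.inner_apply, RCLike.inner_apply, rowE_apply]
  exact Finset.sum_congr rfl fun j _ => mul_comm _ _

lemma frobSq_eq (M : Matrix (Fin m) (Fin n) ℝ) :
    frobSq M = ∑ i, ‖_root_.row M i‖^2 := by
  simp [frobSq, norm_sq_eucl, rowE_apply]

lemma row_mem (M : Matrix (Fin m) (Fin n) ℝ) (i : Fin m) :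
    _root_.row M i ∈ rowSpace M := by
  refine ⟨(WithLp.equiv 2 (Fin m → ℝ)).symm (Pi.single i 1), ?_⟩
  erw [Matrix.toEuclideanLin_apply_piLp_toLp]
  unfold _root_.row
  congr 1
  ext j
  simp [Matrix.mulVec, dotProduct, Pi.single_apply]

lemma mulVecE_norm_sq_le (M : Matrix (Fin m) (Fin n) ℝ) (z : EuclideanSpace ℝ (Fin n)) :
    ‖mulVecE M z‖^2 ≤ frobSq M * ‖z‖^2 := by
  rw [norm_sq_eucl, frobSq_eq, Finset.sum_mul]
  refine Finset.sum_le_sum fun i _ => ?_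
  rw [← inner_row]
  calc ⟪_root_.row M i, z⟫^2 = |⟪_root_.row M i, z⟫|^2 := (sq_abs _).symm
    _ ≤ (‖_root_.row M i‖ * ‖z‖)^2 :=
        pow_le_pow_left₀ (abs_nonneg _) (abs_real_inner_le_norm _ _) 2
    _ = ‖_root_.row M i‖^2 * ‖z‖^2 := by ring

lemma kaczmarz_sub (M : Matrix (Fin m) (Fin n) ℝ) (xLS : EuclideanSpace ℝ (Fin n))
    (w : EuclideanSpace ℝ (Fin m)) (i : Fin m) (x : EuclideanSpace ℝ (Fin n)) :
    kaczmarz M (fun j => mulVecE M xLS j - w j) i x - xLS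
      = (x - xLS) - ((⟪_root_.row M i, x - xLS⟫ + w i) / ‖_root_.row M i‖ ^ 2)
          • _root_.row M i := by
  unfold kaczmarz
  have h1 : ⟪_root_.row M i, x⟫ - (mulVecE M xLS i - w i)
      = ⟪_root_.row M i, x - xLS⟫ + w i := by
    rw [inner_sub_right, ← inner_row]; ring
  rw [h1]
  abel

lemma kaczmarz_err_sq (M : Matrix (Fin m) (Fin n) ℝ) (xLS : EuclideanSpace ℝ (Fin n))
    (w : EuclideanSpace ℝ (Fin m)) (i : Fin m) (x : EuclideanSpace ℝ (Fin n))
    (h : _root_.row M i ≠ 0) :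
    ‖kaczmarz M (fun j => mulVecE M xLS j - w j) i x - xLS‖ ^ 2
      = ‖x - xLS‖^2 + ((w i)^2 - ⟪_root_.row M i, x - xLS⟫^2) / ‖_root_.row M i‖^2 := by
  rw [kaczmarz_sub]
  set a := _root_.row M i with ha
  set e := x - xLS with he
  set r := ⟪a, e⟫ with hr
  have hane : ‖a‖^2 ≠ 0 := (pow_pos (norm_pos_iff.mpr h) 2).ne'
  have h2 : ⟪e, ((r + w i)/‖a‖^2) • a⟫ = ((r + w i)/‖a‖^2) * r := by
    rw [real_inner_smul_right, real_inner_comm]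
  have h3 : ‖((r + w i)/‖a‖^2) • a‖^2 = ((r + w i)/‖a‖^2)^2 * ‖a‖^2 := by
    rw [norm_smul, mul_pow, Real.norm_eq_abs, sq_abs]
  rw [norm_sub_sq_real, h2, h3]
  field_simp
  ring

lemma kaczmarz_sub_mem (M : Matrix (Fin m) (Fin n) ℝ) (c : Fin m → ℝ) (i : Fin m)
    (x xLS : EuclideanSpace ℝ (Fin n)) (hx : x - xLS ∈ rowSpace M) :
    kaczmarz M c i x - xLS ∈ rowSpace M := by
  unfold kaczmarz
  have h : x - ((⟪_root_.row M i, x⟫ - c i) / ‖_root_.row M i‖ ^ 2) • _root_.row M i - xLS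
      = (x - xLS) - ((⟪_root_.row M i, x⟫ - c i) / ‖_root_.row M i‖ ^ 2) • _root_.row M i := by
    abel
  rw [h]
  exact Submodule.sub_mem _ hx (Submodule.smul_mem _ _ (row_mem M i))

lemma step (M : Matrix (Fin m) (Fin n) ℝ) (hrow : ∀ i, _root_.row M i ≠ 0)
    (hF : 0 < frobSq M)
    (xLS : EuclideanSpace ℝ (Fin n)) (w : EuclideanSpace ℝ (Fin m))
    (σ : ℝ) (hσ : 0 ≤ σ)
    (hσA : ∀ z ∈ rowSpace M, σ * ‖z‖ ≤ ‖mulVecE M z‖)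
    (x : EuclideanSpace ℝ (Fin n)) (hx : x - xLS ∈ rowSpace M) :
    ∑ i, (‖_root_.row M i‖^2 / frobSq M) *
        ‖kaczmarz M (fun j => mulVecE M xLS j - w j) i x - xLS‖^2
      ≤ (1 - σ^2 / frobSq M) * ‖x - xLS‖^2 + ‖w‖^2 / frobSq M := by
  have hFne : frobSq M ≠ 0 := hF.ne'
  have key : ∑ i, (‖_root_.row M i‖^2 / frobSq M) *
        ‖kaczmarz M (fun j => mulVecE M xLS j - w j) i x - xLS‖^2
      = ‖x - xLS‖^2 + (‖w‖^2 - ‖mulVecE M (x - xLS)‖^2) / frobSq M := by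
    have hterm : ∀ i : Fin m, (‖_root_.row M i‖^2 / frobSq M) *
          ‖kaczmarz M (fun j => mulVecE M xLS j - w j) i x - xLS‖^2
        = (‖_root_.row M i‖^2 / frobSq M) * ‖x - xLS‖^2
          + ((w i)^2 - (mulVecE M (x - xLS) i)^2) / frobSq M := by
      intro i
      rw [kaczmarz_err_sq M xLS w i x (hrow i), inner_row]
      have h0 : ‖_root_.row M i‖^2 ≠ 0 := (pow_pos (norm_pos_iff.mpr (hrow i)) 2).ne'
      have h0' : ‖_root_.row M i‖ ≠ 0 := norm_ne_zero_iff.mpr (hrow i)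
      field_simp
    calc ∑ i, (‖_root_.row M i‖^2 / frobSq M) *
          ‖kaczmarz M (fun j => mulVecE M xLS j - w j) i x - xLS‖^2
        = ∑ i, ((‖_root_.row M i‖^2 / frobSq M) * ‖x - xLS‖^2
            + ((w i)^2 - (mulVecE M (x - xLS) i)^2) / frobSq M) :=
          Finset.sum_congr rfl fun i _ => hterm i
      _ = (∑ i, ‖_root_.row M i‖^2) / frobSq M * ‖x - xLS‖^2
            + (∑ i, (w i)^2 - ∑ i, (mulVecE M (x - xLS) i)^2) / frobSq M := by
          rw [Finset.sum_add_distrib]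
          congr 1
          · rw [← Finset.sum_mul, ← Finset.sum_div]
          · rw [← Finset.sum_div, Finset.sum_sub_distrib]
      _ = ‖x - xLS‖^2 + (‖w‖^2 - ‖mulVecE M (x - xLS)‖^2) / frobSq M := by
          rw [← frobSq_eq, div_self hFne, one_mul, ← norm_sq_eucl, ← norm_sq_eucl]
  rw [key]
  have hMe : σ^2 * ‖x - xLS‖^2 ≤ ‖mulVecE M (x - xLS)‖^2 := by
    have h1 := hσA _ hx
    calc σ^2 * ‖x - xLS‖^2 = (σ * ‖x - xLS‖)^2 := by ring
      _ ≤ ‖mulVecE M (x - xLS)‖^2 := pow_le_pow_left₀ (by positivity) h1 2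
  have h2 : (‖w‖^2 - ‖mulVecE M (x - xLS)‖^2) / frobSq M
      ≤ (‖w‖^2 - σ^2 * ‖x - xLS‖^2) / frobSq M := by
    gcongr

  have h3 : ‖x - xLS‖^2 + (‖w‖^2 - σ^2 * ‖x - xLS‖^2) / frobSq M
      = (1 - σ^2 / frobSq M) * ‖x - xLS‖^2 + ‖w‖^2 / frobSq M := by
    field_simp
    ring
  linarith

lemma iter_cons (M : Matrix (Fin m) (Fin n) ℝ) (c : Fin m → ℝ) {k : ℕ}
    (i : Fin m) (t : Fin k → Fin m) (x : EuclideanSpace ℝ (Fin n)) :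
    kaczmarzIter M c (Fin.cons i t) x = kaczmarzIter M c t (kaczmarz M c i x) := by
  unfold kaczmarzIter
  rw [List.ofFn_succ]
  simp [Fin.cons_zero, Fin.cons_succ]

lemma iter_bound (M : Matrix (Fin m) (Fin n) ℝ) (hrow : ∀ i, _root_.row M i ≠ 0)
    (hF : 0 < frobSq M)
    (xLS : EuclideanSpace ℝ (Fin n)) (w : EuclideanSpace ℝ (Fin m))
    (σ : ℝ) (hσ : 0 ≤ σ)
    (hσA : ∀ z ∈ rowSpace M, σ * ‖z‖ ≤ ‖mulVecE M z‖)
    (hq0 : 0 ≤ 1 - σ^2 / frobSq M) :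
    ∀ (k : ℕ) (x : EuclideanSpace ℝ (Fin n)), x - xLS ∈ rowSpace M →
    ∑ is : Fin k → Fin m,
        (∏ j, ‖_root_.row M (is j)‖^2 / frobSq M) *
          ‖kaczmarzIter M (fun j => mulVecE M xLS j - w j) is x - xLS‖^2
      ≤ (1 - σ^2 / frobSq M)^k * ‖x - xLS‖^2
        + (‖w‖^2 / frobSq M) * ∑ j ∈ Finset.range k, (1 - σ^2 / frobSq M)^j := by
  intro k
  induction k with
  | zero =>
    intro x hx
    simp [kaczmarzIter]
  | succ k ih =>
    intro x hx
    set q := 1 - σ^2 / frobSq M with hq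
    set C := ‖w‖^2 / frobSq M with hC
    set c := fun j => mulVecE M xLS j - w j with hc
    set p := fun i : Fin m => ‖_root_.row M i‖^2 / frobSq M with hp
    have hpnn : ∀ i, 0 ≤ p i := fun i => by positivity
    have hps : ∑ i, p i = 1 := by
      rw [hp, ← Finset.sum_div, ← frobSq_eq]
      exact div_self hF.ne'
    have hCnn : 0 ≤ C := by positivity
    calc ∑ is : Fin (k+1) → Fin m, (∏ j, p (is j)) * ‖kaczmarzIter M c is x - xLS‖^2
        = ∑ pr : Fin m × (Fin k → Fin m),
            (p pr.1 * ∏ j, p (pr.2 j)) * ‖kaczmarzIter M c pr.2 (kaczmarz M c pr.1 x) - xLS‖^2 := by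
          refine (Fintype.sum_equiv (Fin.consEquiv fun _ => Fin m) _ _ fun pr => ?_).symm
          have hcons : (Fin.consEquiv fun _ => Fin m) pr = Fin.cons pr.1 pr.2 := rfl
          rw [hcons, iter_cons]
          congr 1
          rw [Fin.prod_univ_succ]
          simp [Fin.cons_zero, Fin.cons_succ]
      _ = ∑ i, p i * ∑ t : Fin k → Fin m,
            (∏ j, p (t j)) * ‖kaczmarzIter M c t (kaczmarz M c i x) - xLS‖^2 := by
          rw [Fintype.sum_prod_type]
          refine Finset.sum_congr rfl fun i _ => ?_
          rw [Finset.mul_sum]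
          exact Finset.sum_congr rfl fun t _ => by ring
      _ ≤ ∑ i, p i * (q^k * ‖kaczmarz M c i x - xLS‖^2 + C * ∑ j ∈ Finset.range k, q^j) := by
          refine Finset.sum_le_sum fun i _ => ?_
          exact mul_le_mul_of_nonneg_left
            (ih (kaczmarz M c i x) (kaczmarz_sub_mem M c i x xLS hx)) (hpnn i)
      _ = q^k * (∑ i, p i * ‖kaczmarz M c i x - xLS‖^2)
            + (∑ i, p i) * (C * ∑ j ∈ Finset.range k, q^j) := by
          simp only [mul_add]
          rw [Finset.sum_add_distrib, ← Finset.sum_mul]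
          congr 1
          rw [Finset.mul_sum]
          exact Finset.sum_congr rfl fun i _ => by ring
      _ ≤ q^k * (q * ‖x - xLS‖^2 + C) + 1 * (C * ∑ j ∈ Finset.range k, q^j) := by
          rw [hps]
          have h1 : ∑ i, p i * ‖kaczmarz M c i x - xLS‖^2 ≤ q * ‖x - xLS‖^2 + C :=
            step M hrow hF xLS w σ hσ hσA x hx
          exact add_le_add_left (mul_le_mul_of_nonneg_left h1 (pow_nonneg hq0 k)) _
      _ = q^(k+1) * ‖x - xLS‖^2 + C * ∑ j ∈ Finset.range (k+1), q^j := by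
          rw [Finset.sum_range_succ]
          ring

end RKAux

/-- Main theorem: randomized Kaczmarz on a doubly-noisy system with additive
noise, `Ãx ≈ b̃` with `Ã = A + E`, `b = A x_LS`, `b̃ = b + ε`. The left-hand side
is the expectation `E‖x_k - x_LS‖²` over the i.i.d. row choices `(i₁, …, i_k)`
sampled with probabilities `pᵢ = ‖ãᵢ‖²/‖Ã‖_F²`. -/
theorem rk_doubly_noisy_additive {m n : ℕ}
    (A E : Matrix (Fin m) (Fin n) ℝ)
    (hrow : ∀ i, _root_.row (A + E) i ≠ 0)
    (xLS : EuclideanSpace ℝ (Fin n)) (ε : EuclideanSpace ℝ (Fin m))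
    (σ : ℝ) (hσ : 0 < σ)
    (hσA : ∀ z ∈ rowSpace (A + E), σ * ‖z‖ ≤ ‖mulVecE (A + E) z‖)
    (x0 : EuclideanSpace ℝ (Fin n)) (hx0 : x0 - xLS ∈ rowSpace (A + E))
    (k : ℕ) :
    ∑ is : Fin k → Fin m,
        (∏ j, ‖_root_.row (A + E) (is j)‖ ^ 2 / frobSq (A + E)) *
          ‖kaczmarzIter (A + E) (fun j => mulVecE A xLS j + ε j) is x0 - xLS‖ ^ 2
      ≤ (1 - σ ^ 2 / frobSq (A + E)) ^ k * ‖x0 - xLS‖ ^ 2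
        + ‖mulVecE E xLS - ε‖ ^ 2 / σ ^ 2 := by
  set M := A + E with hM
  set w : EuclideanSpace ℝ (Fin m) := mulVecE E xLS - ε with hw
  have hMsum : ∀ j, mulVecE M xLS j = mulVecE A xLS j + mulVecE E xLS j := by
    intro j
    simp [RKAux.mulVecE_apply, hM, Matrix.add_apply, add_mul, Finset.sum_add_distrib]
  have hwj : ∀ j, w j = mulVecE E xLS j - ε j := fun j => rfl
  have hcfun : (fun j => mulVecE A xLS j + ε j) = fun j => mulVecE M xLS j - w j := by
    funext j
    rw [hMsum j, hwj j]
    ring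
  rcases Nat.eq_zero_or_pos m with hm | hm
  · subst hm
    have hx : x0 - xLS = 0 := by
      obtain ⟨z, hz⟩ := hx0
      rw [← hz]
      ext j
      simp [Matrix.toEuclideanLin_apply, Matrix.mulVec, dotProduct]
    have hL : ∑ is : Fin k → Fin 0,
        (∏ j, ‖_root_.row M (is j)‖ ^ 2 / frobSq M) *
          ‖kaczmarzIter M (fun j => mulVecE A xLS j + ε j) is x0 - xLS‖ ^ 2 = 0 := by
      cases k with
      | zero =>
        simp [kaczmarzIter, hx]
      | succ k =>
        have : IsEmpty (Fin (k+1) → Fin 0) := ⟨fun f => (f 0).elim0⟩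
        rw [Finset.univ_eq_empty, Finset.sum_empty]
    refine le_trans (le_of_eq hL) ?_
    have h0 : ‖x0 - xLS‖ ^ 2 = 0 := by rw [hx, norm_zero]; ring
    rw [h0, mul_zero, zero_add]
    positivity
  · have hF : 0 < frobSq M := by
      rw [RKAux.frobSq_eq]
      refine Finset.sum_pos' (fun i _ => by positivity) ⟨⟨0, hm⟩, Finset.mem_univ _, ?_⟩
      exact pow_pos (norm_pos_iff.mpr (hrow ⟨0, hm⟩)) 2
    have hσ2F : σ^2 ≤ frobSq M := by
      set i0 : Fin m := ⟨0, hm⟩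
      have h1 := hσA _ (RKAux.row_mem M i0)
      have h2 := RKAux.mulVecE_norm_sq_le M (row M i0)
      have h3 : σ^2 * ‖_root_.row M i0‖^2 ≤ frobSq M * ‖_root_.row M i0‖^2 := by
        calc σ^2 * ‖_root_.row M i0‖^2 = (σ * ‖_root_.row M i0‖)^2 := by ring
          _ ≤ ‖mulVecE M (row M i0)‖^2 := pow_le_pow_left₀ (by positivity) h1 2
          _ ≤ _ := h2
      exact le_of_mul_le_mul_right h3 (pow_pos (norm_pos_iff.mpr (hrow i0)) 2)
    have hq0 : 0 ≤ 1 - σ^2 / frobSq M := by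
      rw [sub_nonneg]
      exact (div_le_one hF).mpr hσ2F
    have main := RKAux.iter_bound M hrow hF xLS w σ hσ.le hσA hq0 k x0 hx0
    rw [hcfun]
    refine main.trans ?_
    refine add_le_add_right ?_ _
    set q := 1 - σ^2 / frobSq M with hq
    have hd : 0 < σ^2 / frobSq M := by positivity
    have hq1 : q ≠ 1 := by rw [hq]; intro hcon; rw [sub_eq_self] at hcon; linarith
    have hqk : 0 ≤ q^k := pow_nonneg hq0 k
    have hgeo : ∑ j ∈ Finset.range k, q^j ≤ frobSq M / σ^2 := by
      rw [geom_sum_eq hq1 k]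
      have e0 : q - 1 = -(σ^2 / frobSq M) := by rw [hq]; ring
      have e1 : (q^k - 1)/(q - 1) = (1 - q^k) * (frobSq M / σ^2) := by
        rw [e0, div_neg, ← neg_div, neg_sub, div_eq_mul_inv, inv_div]
      rw [e1]
      calc (1 - q^k) * (frobSq M / σ^2) ≤ 1 * (frobSq M / σ^2) :=
            mul_le_mul_of_nonneg_right (by linarith) (by positivity)
        _ = frobSq M / σ^2 := one_mul _
    calc ‖w‖^2 / frobSq M * ∑ j ∈ Finset.range k, q^j
        ≤ ‖w‖^2 / frobSq M * (frobSq M / σ^2) :=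
          mul_le_mul_of_nonneg_left hgeo (by positivity)
      _ = ‖w‖^2 / σ^2 := by field_simp
end

section
/- (Unsquared form of the main theorem.) Let A, E ∈ ℝ^{m×n}, Ã := A + E with every row ã_i nonzero, let x_LS ∈ ℝ^n, b := A x_LS, ε ∈ ℝ^m, b̃ := b + ε, p_i := ‖ã_i‖²/‖Ã‖_F², and K_i(x) := x − ((⟨ã_i, x⟩ − b̃_i)/‖ã_i‖²) ã_i. Let σ > 0 satisfy ‖Ã z‖ ≥ σ‖z‖ for every z ∈ range(Ãᵀ), and let x_0 − x_LS ∈ range(Ãᵀ). Then for every k ≥ 0, Σ_{(i_1,…,i_k) ∈ {1,…,m}^k} p_{i_1}⋯p_{i_k} ‖K_{i_k}(⋯K_{i_1}(x_0)⋯) − x_LS‖ ≤ (1 − σ²/‖Ã‖_F²)^{k/2} ‖x_0 − x_LS‖ + ‖E x_LS − ε‖/σ. -/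
open Matrix
open scoped RealInnerProductSpace

section Aux

lemma inner_row {m n : ℕ} (M : Matrix (Fin m) (Fin n) ℝ) (i : Fin m)
    (x : EuclideanSpace ℝ (Fin n)) : ⟪_root_.row M i, x⟫ = ∑ j, M i j * x j := by
  simp [_root_.row, EuclideanSpace.inner_eq_star_dotProduct, WithLp.equiv_symm_apply,
    dotProduct, mul_comm]

lemma mulVecE_apply {m n : ℕ} (M : Matrix (Fin m) (Fin n) ℝ)
    (x : EuclideanSpace ℝ (Fin n)) (i : Fin m) : mulVecE M x i = ⟪_root_.row M i, x⟫ := by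
  rw [inner_row]
  simp [mulVecE, Matrix.toEuclideanLin, Matrix.toLin'_apply, Matrix.mulVec, dotProduct]

lemma norm_row_sq {m n : ℕ} (M : Matrix (Fin m) (Fin n) ℝ) (i : Fin m) :
    ‖_root_.row M i‖ ^ 2 = ∑ j, M i j ^ 2 := by
  rw [← real_inner_self_eq_norm_sq, inner_row]
  simp [_root_.row, WithLp.equiv_symm_apply, sq]

lemma norm_sq_eq {m : ℕ} (v : EuclideanSpace ℝ (Fin m)) : ‖v‖ ^ 2 = ∑ i, v i ^ 2 := by
  rw [← real_inner_self_eq_norm_sq]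
  rw [PiLp.inner_apply]
  exact Finset.sum_congr rfl fun i _ => by simp [sq]

lemma frobSq_eq {m n : ℕ} (M : Matrix (Fin m) (Fin n) ℝ) :
    frobSq M = ∑ i, ‖_root_.row M i‖ ^ 2 := by
  simp [frobSq, norm_row_sq]

lemma row_mem_rowSpace {m n : ℕ} (M : Matrix (Fin m) (Fin n) ℝ) (i : Fin m) :
    _root_.row M i ∈ rowSpace M := by
  refine ⟨(WithLp.equiv 2 (Fin m → ℝ)).symm (Pi.single i 1), ?_⟩
  apply (WithLp.equiv 2 (Fin n → ℝ)).injective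
  ext j
  simp [_root_.row, Matrix.toEuclideanLin, Matrix.toLin'_apply, Matrix.mulVec_single,
    WithLp.equiv_symm_apply]

lemma mulVecE_add {m n : ℕ} (A E : Matrix (Fin m) (Fin n) ℝ) (x : EuclideanSpace ℝ (Fin n)) :
    mulVecE (A + E) x = mulVecE A x + mulVecE E x := by
  simp [mulVecE, map_add]

lemma sqrt_add_le (a b : ℝ) (ha : 0 ≤ a) (hb : 0 ≤ b) :
    Real.sqrt (a + b) ≤ Real.sqrt a + Real.sqrt b := by
  have h1 : a + b ≤ (Real.sqrt a + Real.sqrt b) ^ 2 := by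
    have := Real.sq_sqrt ha
    have := Real.sq_sqrt hb
    nlinarith [Real.sqrt_nonneg a, Real.sqrt_nonneg b,
      mul_nonneg (Real.sqrt_nonneg a) (Real.sqrt_nonneg b)]
  calc Real.sqrt (a + b) ≤ Real.sqrt ((Real.sqrt a + Real.sqrt b) ^ 2) :=
        Real.sqrt_le_sqrt h1
    _ = Real.sqrt a + Real.sqrt b := Real.sqrt_sq (by positivity)

lemma kacz_step {m n : ℕ} (T : Matrix (Fin m) (Fin n) ℝ) (c : Fin m → ℝ)
    (xLS : EuclideanSpace ℝ (Fin n)) (r : EuclideanSpace ℝ (Fin m))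
    (hc : ∀ i, c i = ⟪_root_.row T i, xLS⟫ - r i)
    (hrow : ∀ i, _root_.row T i ≠ 0) (i : Fin m) (x : EuclideanSpace ℝ (Fin n)) :
    ‖kaczmarz T c i x - xLS‖ ^ 2
      = ‖x - xLS‖ ^ 2 - ⟪_root_.row T i, x - xLS⟫ ^ 2 / ‖_root_.row T i‖ ^ 2
        + (r i) ^ 2 / ‖_root_.row T i‖ ^ 2 := by
  set a := _root_.row T i with ha_def
  have ha : (0:ℝ) < ‖a‖ ^ 2 := by
    have h0 : 0 < ‖a‖ := norm_pos_iff.mpr (hrow i)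
    positivity
  have key : kaczmarz T c i x - xLS
      = (x - xLS) - ((⟪a, x - xLS⟫ + r i) / ‖a‖ ^ 2) • a := by
    unfold kaczmarz
    have h1 : ⟪a, x⟫ - c i = ⟪a, x - xLS⟫ + r i := by
      rw [hc, inner_sub_right]; ring
    rw [← ha_def, h1]
    abel
  rw [key, norm_sub_sq_real, real_inner_smul_right, real_inner_comm (x - xLS) a,
    norm_smul, mul_pow, Real.norm_eq_abs, sq_abs]
  generalize ⟪a, x - xLS⟫ = s
  field_simp
  ring

lemma kacz_mem {m n : ℕ} (T : Matrix (Fin m) (Fin n) ℝ) (c : Fin m → ℝ)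
    (xLS : EuclideanSpace ℝ (Fin n)) (i : Fin m) (x : EuclideanSpace ℝ (Fin n))
    (hx : x - xLS ∈ rowSpace T) : kaczmarz T c i x - xLS ∈ rowSpace T := by
  have : kaczmarz T c i x - xLS
      = (x - xLS) - ((⟪_root_.row T i, x⟫ - c i) / ‖_root_.row T i‖ ^ 2) • _root_.row T i := by
    unfold kaczmarz; abel
  rw [this]
  exact Submodule.sub_mem _ hx (Submodule.smul_mem _ _ (row_mem_rowSpace T i))

lemma exp_step {m n : ℕ} (T : Matrix (Fin m) (Fin n) ℝ) (c : Fin m → ℝ)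
    (xLS : EuclideanSpace ℝ (Fin n)) (r : EuclideanSpace ℝ (Fin m)) (σ : ℝ)
    (hc : ∀ i, c i = ⟪_root_.row T i, xLS⟫ - r i)
    (hrow : ∀ i, _root_.row T i ≠ 0)
    (hF : 0 < frobSq T)
    (hσA : ∀ z ∈ rowSpace T, σ * ‖z‖ ≤ ‖mulVecE T z‖)
    (hσ0 : 0 ≤ σ)
    (x : EuclideanSpace ℝ (Fin n)) (hx : x - xLS ∈ rowSpace T) :
    ∑ i, ‖_root_.row T i‖ ^ 2 / frobSq T * ‖kaczmarz T c i x - xLS‖ ^ 2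
      ≤ (1 - σ ^ 2 / frobSq T) * ‖x - xLS‖ ^ 2 + ‖r‖ ^ 2 / frobSq T := by
  have hna : ∀ i, (‖_root_.row T i‖ : ℝ) ^ 2 ≠ 0 := fun i => by
    have h0 : 0 < ‖_root_.row T i‖ := norm_pos_iff.mpr (hrow i)
    positivity
  have heq : ∀ i, ‖_root_.row T i‖ ^ 2 / frobSq T * ‖kaczmarz T c i x - xLS‖ ^ 2
      = ‖_root_.row T i‖ ^ 2 * ‖x - xLS‖ ^ 2 / frobSq T
        - ⟪_root_.row T i, x - xLS⟫ ^ 2 / frobSq T + (r i) ^ 2 / frobSq T := by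
    intro i
    rw [kacz_step T c xLS r hc hrow i x]
    have hai := hna i
    have hai' : ‖_root_.row T i‖ ≠ 0 := norm_ne_zero_iff.mpr (hrow i)
    generalize ⟪_root_.row T i, x - xLS⟫ = s
    field_simp
  rw [Finset.sum_congr rfl (fun i _ => heq i)]
  rw [Finset.sum_add_distrib, Finset.sum_sub_distrib, ← Finset.sum_div, ← Finset.sum_div,
    ← Finset.sum_div, ← Finset.sum_mul]
  rw [← frobSq_eq]
  have hTe : σ ^ 2 * ‖x - xLS‖ ^ 2 ≤ ∑ i, ⟪_root_.row T i, x - xLS⟫ ^ 2 := by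
    have h1 := hσA (x - xLS) hx
    have h2 : ‖mulVecE T (x - xLS)‖ ^ 2 = ∑ i, ⟪_root_.row T i, x - xLS⟫ ^ 2 := by
      rw [norm_sq_eq]
      exact Finset.sum_congr rfl fun i _ => by rw [mulVecE_apply]
    calc σ ^ 2 * ‖x - xLS‖ ^ 2 = (σ * ‖x - xLS‖) ^ 2 := by ring
      _ ≤ ‖mulVecE T (x - xLS)‖ ^ 2 := by
          apply pow_le_pow_left₀ (by positivity) h1 2
      _ = _ := h2
  have hr : ∑ i, (r i) ^ 2 = ‖r‖ ^ 2 := (norm_sq_eq r).symm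
  rw [hr]
  have h3 : σ ^ 2 * ‖x - xLS‖ ^ 2 / frobSq T ≤ (∑ i, ⟪_root_.row T i, x - xLS⟫ ^ 2) / frobSq T :=
    (div_le_div_iff_of_pos_right hF).mpr hTe
  have h4 : (1 - σ ^ 2 / frobSq T) * ‖x - xLS‖ ^ 2 + ‖r‖ ^ 2 / frobSq T
      = frobSq T * ‖x - xLS‖ ^ 2 / frobSq T - σ ^ 2 * ‖x - xLS‖ ^ 2 / frobSq T
        + ‖r‖ ^ 2 / frobSq T := by
    field_simp
  rw [h4]
  linarith [h3]

end Aux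

lemma iter_sq {m n : ℕ} (T : Matrix (Fin m) (Fin n) ℝ) (c : Fin m → ℝ)
    (xLS : EuclideanSpace ℝ (Fin n)) (r : EuclideanSpace ℝ (Fin m)) (σ : ℝ)
    (hc : ∀ i, c i = ⟪_root_.row T i, xLS⟫ - r i)
    (hrow : ∀ i, _root_.row T i ≠ 0)
    (hF : 0 < frobSq T)
    (hσA : ∀ z ∈ rowSpace T, σ * ‖z‖ ≤ ‖mulVecE T z‖)
    (hσ0 : 0 ≤ σ)
    (hα : 0 ≤ 1 - σ ^ 2 / frobSq T) :
    ∀ (k : ℕ) (x : EuclideanSpace ℝ (Fin n)), x - xLS ∈ rowSpace T →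
    ∑ is : Fin k → Fin m,
        (∏ j, ‖_root_.row T (is j)‖ ^ 2 / frobSq T) * ‖kaczmarzIter T c is x - xLS‖ ^ 2
      ≤ (1 - σ ^ 2 / frobSq T) ^ k * ‖x - xLS‖ ^ 2
        + (∑ j ∈ Finset.range k, (1 - σ ^ 2 / frobSq T) ^ j) * (‖r‖ ^ 2 / frobSq T) := by
  intro k
  induction k with
  | zero => intro x hx; simp [kaczmarzIter]
  | succ k ih =>
    intro x hx
    have hp : ∀ i : Fin m, 0 ≤ ‖_root_.row T i‖ ^ 2 / frobSq T := fun i => by positivity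
    have hp1 : ∑ i, ‖_root_.row T i‖ ^ 2 / frobSq T = 1 := by
      rw [← Finset.sum_div, ← frobSq_eq, div_self hF.ne']
    have hsum : (∑ is : Fin (k+1) → Fin m,
          (∏ j, ‖_root_.row T (is j)‖ ^ 2 / frobSq T) * ‖kaczmarzIter T c is x - xLS‖ ^ 2)
        = ∑ i, (‖_root_.row T i‖ ^ 2 / frobSq T) *
            ∑ g : Fin k → Fin m, (∏ j, ‖_root_.row T (g j)‖ ^ 2 / frobSq T) *
              ‖kaczmarzIter T c g (kaczmarz T c i x) - xLS‖ ^ 2 := by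
      rw [← Equiv.sum_comp (Fin.consEquiv fun _ : Fin (k+1) => Fin m)]
      rw [Fintype.sum_prod_type]
      refine Finset.sum_congr rfl fun i _ => ?_
      rw [Finset.mul_sum]
      refine Finset.sum_congr rfl fun g _ => ?_
      have h1 : (Fin.consEquiv fun _ : Fin (k+1) => Fin m) (i, g) = Fin.cons i g := rfl
      have h2 : kaczmarzIter T c (Fin.cons i g) x = kaczmarzIter T c g (kaczmarz T c i x) := by
        unfold kaczmarzIter
        rw [List.ofFn_succ]
        simp [Fin.cons_zero, Fin.cons_succ]
      rw [h1, h2, Fin.prod_univ_succ]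
      simp only [Fin.cons_zero, Fin.cons_succ]
      ring
    rw [hsum]
    have step1 : ∑ i, (‖_root_.row T i‖ ^ 2 / frobSq T) *
            (∑ g : Fin k → Fin m, (∏ j, ‖_root_.row T (g j)‖ ^ 2 / frobSq T) *
              ‖kaczmarzIter T c g (kaczmarz T c i x) - xLS‖ ^ 2)
        ≤ ∑ i, (‖_root_.row T i‖ ^ 2 / frobSq T) *
            ((1 - σ ^ 2 / frobSq T) ^ k * ‖kaczmarz T c i x - xLS‖ ^ 2
              + (∑ j ∈ Finset.range k, (1 - σ ^ 2 / frobSq T) ^ j) * (‖r‖ ^ 2 / frobSq T)) :=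
      Finset.sum_le_sum fun i _ =>
        mul_le_mul_of_nonneg_left (ih (kaczmarz T c i x) (kacz_mem T c xLS i x hx)) (hp i)
    refine le_trans step1 ?_
    have expand : ∑ i, (‖_root_.row T i‖ ^ 2 / frobSq T) *
            ((1 - σ ^ 2 / frobSq T) ^ k * ‖kaczmarz T c i x - xLS‖ ^ 2
              + (∑ j ∈ Finset.range k, (1 - σ ^ 2 / frobSq T) ^ j) * (‖r‖ ^ 2 / frobSq T))
        = (1 - σ ^ 2 / frobSq T) ^ k *
            (∑ i, (‖_root_.row T i‖ ^ 2 / frobSq T) * ‖kaczmarz T c i x - xLS‖ ^ 2)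
          + (∑ j ∈ Finset.range k, (1 - σ ^ 2 / frobSq T) ^ j) * (‖r‖ ^ 2 / frobSq T) := by
      simp only [mul_add]
      rw [Finset.sum_add_distrib, ← Finset.sum_mul, hp1, one_mul, Finset.mul_sum]
      congr 1
      exact Finset.sum_congr rfl fun i _ => by ring
    rw [expand]
    have h5 := exp_step T c xLS r σ hc hrow hF hσA hσ0 x hx
    have h6 := mul_le_mul_of_nonneg_left h5 (pow_nonneg hα k)
    rw [Finset.sum_range_succ, add_mul]
    have h7 : (1 - σ ^ 2 / frobSq T) ^ k *
          ((1 - σ ^ 2 / frobSq T) * ‖x - xLS‖ ^ 2 + ‖r‖ ^ 2 / frobSq T)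
        = (1 - σ ^ 2 / frobSq T) ^ (k + 1) * ‖x - xLS‖ ^ 2
          + (1 - σ ^ 2 / frobSq T) ^ k * (‖r‖ ^ 2 / frobSq T) := by
      rw [pow_succ]; ring
    linarith [h6, h7.le, h7.ge]

lemma sum_prod_p {m n : ℕ} (T : Matrix (Fin m) (Fin n) ℝ) (hF : 0 < frobSq T) :
    ∀ k : ℕ, ∑ is : Fin k → Fin m, ∏ j, ‖_root_.row T (is j)‖ ^ 2 / frobSq T = 1 := by
  have hp1 : ∑ i, ‖_root_.row T i‖ ^ 2 / frobSq T = 1 := by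
    rw [← Finset.sum_div, ← frobSq_eq, div_self hF.ne']
  intro k
  induction k with
  | zero => simp
  | succ k ih =>
    rw [← Equiv.sum_comp (Fin.consEquiv fun _ : Fin (k+1) => Fin m)]
    rw [Fintype.sum_prod_type]
    have : ∀ (i : Fin m) (g : Fin k → Fin m),
        (∏ j : Fin (k+1), ‖_root_.row T ((Fin.consEquiv fun _ : Fin (k+1) => Fin m) (i, g) j)‖ ^ 2
          / frobSq T)
        = (‖_root_.row T i‖ ^ 2 / frobSq T) * ∏ j : Fin k, ‖_root_.row T (g j)‖ ^ 2 / frobSq T := by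
      intro i g
      have h1 : (Fin.consEquiv fun _ : Fin (k+1) => Fin m) (i, g) = Fin.cons i g := rfl
      rw [h1, Fin.prod_univ_succ]
      simp only [Fin.cons_zero, Fin.cons_succ]
    simp only [this]
    rw [← Finset.sum_mul_sum, hp1, ih, one_mul]

/-- Unsquared form of the main theorem: randomized Kaczmarz on a doubly-noisy
system with additive noise. The left-hand side is the expectation
`E‖x_k - x_LS‖` over the i.i.d. row choices `(i₁, …, i_k)` sampled with
probabilities `pᵢ = ‖ãᵢ‖²/‖Ã‖_F²`; the rate is `(1 - σ²/‖Ã‖_F²)^{k/2}`. -/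
theorem rk_doubly_noisy_additive_unsquared {m n : ℕ}
    (A E : Matrix (Fin m) (Fin n) ℝ)
    (hrow : ∀ i, _root_.row (A + E) i ≠ 0)
    (xLS : EuclideanSpace ℝ (Fin n)) (ε : EuclideanSpace ℝ (Fin m))
    (σ : ℝ) (hσ : 0 < σ)
    (hσA : ∀ z ∈ rowSpace (A + E), σ * ‖z‖ ≤ ‖mulVecE (A + E) z‖)
    (x0 : EuclideanSpace ℝ (Fin n)) (hx0 : x0 - xLS ∈ rowSpace (A + E))
    (k : ℕ) :
    ∑ is : Fin k → Fin m,
        (∏ j, ‖_root_.row (A + E) (is j)‖ ^ 2 / frobSq (A + E)) *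
          ‖kaczmarzIter (A + E) (fun j => mulVecE A xLS j + ε j) is x0 - xLS‖
      ≤ Real.sqrt ((1 - σ ^ 2 / frobSq (A + E)) ^ k) * ‖x0 - xLS‖
        + ‖mulVecE E xLS - ε‖ / σ := by
  rcases Nat.eq_zero_or_pos m with hm | hm
  · -- degenerate case m = 0
    subst hm
    have hx0' : x0 - xLS = 0 := by
      obtain ⟨z, hz⟩ := hx0
      rw [← hz, Subsingleton.elim z 0, map_zero]
    have hLHS : (∑ is : Fin k → Fin 0,
        (∏ j, ‖_root_.row (A + E) (is j)‖ ^ 2 / frobSq (A + E)) *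
          ‖kaczmarzIter (A + E) (fun j => mulVecE A xLS j + ε j) is x0 - xLS‖) = 0 := by
      apply Finset.sum_eq_zero
      intro is _
      cases k with
      | zero =>
        have h1 : kaczmarzIter (A + E) (fun j => mulVecE A xLS j + ε j) is x0 = x0 := by
          simp [kaczmarzIter]
        rw [h1, norm_eq_zero.mpr hx0', mul_zero]
      | succ k => exact (is 0).elim0
    rw [hLHS]
    exact add_nonneg (mul_nonneg (Real.sqrt_nonneg _) (norm_nonneg _))
      (div_nonneg (norm_nonneg _) hσ.le)
  · set T := A + E with hT
    set r : EuclideanSpace ℝ (Fin m) := mulVecE E xLS - ε with hr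
    set c : Fin m → ℝ := fun j => mulVecE A xLS j + ε j with hcdef
    set i0 : Fin m := ⟨0, hm⟩
    have hF : 0 < frobSq T := by
      rw [frobSq_eq]
      refine Finset.sum_pos' (fun i _ => by positivity) ⟨i0, Finset.mem_univ _, ?_⟩
      have h0 : 0 < ‖_root_.row T i0‖ := norm_pos_iff.mpr (hrow i0)
      positivity
    have hσF : σ ^ 2 ≤ frobSq T := by
      have h0 : 0 < ‖_root_.row T i0‖ := norm_pos_iff.mpr (hrow i0)
      have h1 := hσA (_root_.row T i0) (row_mem_rowSpace T i0)
      have h2 : ‖mulVecE T (_root_.row T i0)‖ ^ 2 ≤ frobSq T * ‖_root_.row T i0‖ ^ 2 := by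
        rw [norm_sq_eq, frobSq_eq, Finset.sum_mul]
        refine Finset.sum_le_sum fun i _ => ?_
        rw [mulVecE_apply]
        have h3 := real_inner_mul_inner_self_le (_root_.row T i) (_root_.row T i0)
        rw [real_inner_self_eq_norm_sq, real_inner_self_eq_norm_sq] at h3
        calc ⟪_root_.row T i, _root_.row T i0⟫ ^ 2 = ⟪_root_.row T i, _root_.row T i0⟫ * ⟪_root_.row T i, _root_.row T i0⟫ := sq _
          _ ≤ ‖_root_.row T i‖ ^ 2 * ‖_root_.row T i0‖ ^ 2 := h3
      have h1sq : (σ * ‖_root_.row T i0‖) ^ 2 ≤ ‖mulVecE T (_root_.row T i0)‖ ^ 2 :=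
        pow_le_pow_left₀ (mul_nonneg hσ.le (norm_nonneg _)) h1 2
      nlinarith [h1sq, h2, mul_pos h0 h0, sq_nonneg ‖_root_.row T i0‖]
    have hα : 0 ≤ 1 - σ ^ 2 / frobSq T := by
      rw [sub_nonneg]
      exact (div_le_one hF).mpr hσF
    have hc : ∀ i, c i = ⟪_root_.row T i, xLS⟫ - r i := by
      intro i
      have h1 : ⟪_root_.row T i, xLS⟫ = mulVecE T xLS i := (mulVecE_apply T xLS i).symm
      rw [h1, hT, mulVecE_add]
      simp only [hcdef, hr, PiLp.add_apply, PiLp.sub_apply]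
      ring
    have hiter := iter_sq T c xLS r σ hc hrow hF hσA hσ.le hα k x0 hx0
    have hgeo : (∑ j ∈ Finset.range k, (1 - σ ^ 2 / frobSq T) ^ j) * (‖r‖ ^ 2 / frobSq T)
        ≤ ‖r‖ ^ 2 / σ ^ 2 := by
      have hg := geom_sum_mul (1 - σ ^ 2 / frobSq T) k
      have hαk : 0 ≤ (1 - σ ^ 2 / frobSq T) ^ k := pow_nonneg hα k
      have hS : (∑ j ∈ Finset.range k, (1 - σ ^ 2 / frobSq T) ^ j) ≤ frobSq T / σ ^ 2 := by
        rw [le_div_iff₀ (by positivity)]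
        have h1 : (∑ j ∈ Finset.range k, (1 - σ ^ 2 / frobSq T) ^ j) * (σ ^ 2 / frobSq T)
            ≤ 1 := by nlinarith [hg, hαk]
        have h2 := mul_le_mul_of_nonneg_right h1 hF.le
        calc (∑ j ∈ Finset.range k, (1 - σ ^ 2 / frobSq T) ^ j) * σ ^ 2
            = (∑ j ∈ Finset.range k, (1 - σ ^ 2 / frobSq T) ^ j) * (σ ^ 2 / frobSq T)
              * frobSq T := by field_simp
          _ ≤ 1 * frobSq T := h2
          _ = frobSq T := one_mul _
      calc (∑ j ∈ Finset.range k, (1 - σ ^ 2 / frobSq T) ^ j) * (‖r‖ ^ 2 / frobSq T)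
          ≤ (frobSq T / σ ^ 2) * (‖r‖ ^ 2 / frobSq T) :=
            mul_le_mul_of_nonneg_right hS (by positivity)
        _ = ‖r‖ ^ 2 / σ ^ 2 := by field_simp
    -- Cauchy–Schwarz / Jensen step
    have hPnn : ∀ is : Fin k → Fin m, 0 ≤ ∏ j, ‖_root_.row T (is j)‖ ^ 2 / frobSq T := fun is =>
      Finset.prod_nonneg fun j _ => by positivity
    have hLnn : 0 ≤ ∑ is : Fin k → Fin m,
        (∏ j, ‖_root_.row T (is j)‖ ^ 2 / frobSq T) * ‖kaczmarzIter T c is x0 - xLS‖ :=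
      Finset.sum_nonneg fun is _ => mul_nonneg (hPnn is) (norm_nonneg _)
    have hCS : (∑ is : Fin k → Fin m,
          (∏ j, ‖_root_.row T (is j)‖ ^ 2 / frobSq T) * ‖kaczmarzIter T c is x0 - xLS‖) ^ 2
        ≤ ∑ is : Fin k → Fin m,
          (∏ j, ‖_root_.row T (is j)‖ ^ 2 / frobSq T) * ‖kaczmarzIter T c is x0 - xLS‖ ^ 2 := by
      have hCS0 := Finset.sum_mul_sq_le_sq_mul_sq Finset.univ
        (fun is : Fin k → Fin m => Real.sqrt (∏ j, ‖_root_.row T (is j)‖ ^ 2 / frobSq T))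
        (fun is : Fin k → Fin m => Real.sqrt (∏ j, ‖_root_.row T (is j)‖ ^ 2 / frobSq T)
          * ‖kaczmarzIter T c is x0 - xLS‖)
      calc (∑ is : Fin k → Fin m,
            (∏ j, ‖_root_.row T (is j)‖ ^ 2 / frobSq T) * ‖kaczmarzIter T c is x0 - xLS‖) ^ 2
          = (∑ is : Fin k → Fin m, Real.sqrt (∏ j, ‖_root_.row T (is j)‖ ^ 2 / frobSq T)
              * (Real.sqrt (∏ j, ‖_root_.row T (is j)‖ ^ 2 / frobSq T)
                * ‖kaczmarzIter T c is x0 - xLS‖)) ^ 2 := by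
            congr 1
            refine Finset.sum_congr rfl fun is _ => ?_
            rw [← mul_assoc, Real.mul_self_sqrt (hPnn is)]
        _ ≤ (∑ is : Fin k → Fin m, Real.sqrt (∏ j, ‖_root_.row T (is j)‖ ^ 2 / frobSq T) ^ 2)
              * ∑ is : Fin k → Fin m, (Real.sqrt (∏ j, ‖_root_.row T (is j)‖ ^ 2 / frobSq T)
                * ‖kaczmarzIter T c is x0 - xLS‖) ^ 2 := hCS0
        _ = (∑ is : Fin k → Fin m, ∏ j, ‖_root_.row T (is j)‖ ^ 2 / frobSq T)
              * ∑ is : Fin k → Fin m, (∏ j, ‖_root_.row T (is j)‖ ^ 2 / frobSq T)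
                * ‖kaczmarzIter T c is x0 - xLS‖ ^ 2 := by
            congr 1
            · exact Finset.sum_congr rfl fun is _ => Real.sq_sqrt (hPnn is)
            · exact Finset.sum_congr rfl fun is _ => by
                rw [mul_pow, Real.sq_sqrt (hPnn is)]
        _ = ∑ is : Fin k → Fin m, (∏ j, ‖_root_.row T (is j)‖ ^ 2 / frobSq T)
              * ‖kaczmarzIter T c is x0 - xLS‖ ^ 2 := by
            rw [sum_prod_p T hF k, one_mul]
    have hαk : 0 ≤ (1 - σ ^ 2 / frobSq T) ^ k := pow_nonneg hα k
    have hbound : (∑ is : Fin k → Fin m,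
          (∏ j, ‖_root_.row T (is j)‖ ^ 2 / frobSq T) * ‖kaczmarzIter T c is x0 - xLS‖) ^ 2
        ≤ (1 - σ ^ 2 / frobSq T) ^ k * ‖x0 - xLS‖ ^ 2 + ‖r‖ ^ 2 / σ ^ 2 :=
      le_trans hCS (by linarith [hiter, hgeo])
    have hrhs : (0:ℝ) ≤ (1 - σ ^ 2 / frobSq T) ^ k * ‖x0 - xLS‖ ^ 2 + ‖r‖ ^ 2 / σ ^ 2 :=
      add_nonneg (mul_nonneg hαk (by positivity)) (by positivity)
    have h1 : ∑ is : Fin k → Fin m,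
          (∏ j, ‖_root_.row T (is j)‖ ^ 2 / frobSq T) * ‖kaczmarzIter T c is x0 - xLS‖
        ≤ Real.sqrt ((1 - σ ^ 2 / frobSq T) ^ k * ‖x0 - xLS‖ ^ 2 + ‖r‖ ^ 2 / σ ^ 2) :=
      (Real.le_sqrt hLnn hrhs).mpr hbound
    refine le_trans h1 ?_
    have h2 := sqrt_add_le ((1 - σ ^ 2 / frobSq T) ^ k * ‖x0 - xLS‖ ^ 2) (‖r‖ ^ 2 / σ ^ 2)
      (mul_nonneg hαk (by positivity)) (by positivity)
    refine le_trans h2 ?_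
    have h3 : Real.sqrt ((1 - σ ^ 2 / frobSq T) ^ k * ‖x0 - xLS‖ ^ 2)
        = Real.sqrt ((1 - σ ^ 2 / frobSq T) ^ k) * ‖x0 - xLS‖ := by
      rw [Real.sqrt_mul hαk, Real.sqrt_sq (norm_nonneg _)]
    have h4 : Real.sqrt (‖r‖ ^ 2 / σ ^ 2) = ‖r‖ / σ := by
      rw [← div_pow, Real.sqrt_sq (by positivity)]
    rw [h3, h4]
end

section
/- (RK via the partially noisy system.) Let A, E ∈ ℝ^{m×n} with rank(A + E) = rank(A), Ã := A + E with every row ã_i nonzero. Let σ > 0 satisfy ‖A z‖ ≥ σ‖z‖ for every z ∈ range(Aᵀ) with ‖E‖ < σ, and let σ̃ > 0 satisfy ‖Ã z‖ ≥ σ̃‖z‖ for every z ∈ range(Ãᵀ). Let x_LS satisfy A x_LS = b and x_LS ∈ range(Aᵀ); assume the partially noisy system Ãx = b is consistent, with minimum-norm solution x_PNLS (Ã x_PNLS = b, x_PNLS ∈ range(Ãᵀ)). Let ε ∈ ℝ^m, b̃ := b + ε, set p_i := ‖ã_i‖²/‖Ã‖_F² and K_i(x) := x − ((⟨ã_i,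 x⟩ − b̃_i)/‖ã_i‖²) ã_i, and let x_0 ∈ range(Ãᵀ). Then for every k ≥ 0, Σ_{(i_1,…,i_k) ∈ {1,…,m}^k} p_{i_1}⋯p_{i_k} ‖K_{i_k}(⋯K_{i_1}(x_0)⋯) − x_LS‖ ≤ (1 − σ̃²/‖Ã‖_F²)^{k/2} ‖x_0 − x_PNLS‖ + 2‖x_LS‖(‖E‖/σ)/(1 − ‖E‖/σ) + ‖ε‖/σ̃. -/
open Matrix
open scoped RealInnerProductSpace

set_option maxHeartbeats 1000000

namespace RKaux
variable {m n : ℕ}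

lemma mulVecE_apply (M : Matrix (Fin m) (Fin n) ℝ) (x : EuclideanSpace ℝ (Fin n)) (i : Fin m) :
    mulVecE M x i = ∑ j, M i j * x j := rfl

lemma row_apply (M : Matrix (Fin m) (Fin n) ℝ) (i : Fin m) (j : Fin n) :
    _root_.row M i j = M i j := rfl

lemma inner_row (M : Matrix (Fin m) (Fin n) ℝ) (i : Fin m) (x : EuclideanSpace ℝ (Fin n)) :
    ⟪_root_.row M i, x⟫ = mulVecE M x i := by
  simp only [mulVecE_apply, PiLp.inner_apply, RCLike.inner_apply', conj_trivial, row_apply]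

lemma norm_sq_eq (x : EuclideanSpace ℝ (Fin m)) : ‖x‖ ^ 2 = ∑ i, (x i) ^ 2 := by
  rw [← real_inner_self_eq_norm_sq]
  simp only [PiLp.inner_apply, RCLike.inner_apply, conj_trivial, sq]

lemma norm_row_sq (M : Matrix (Fin m) (Fin n) ℝ) (i : Fin m) :
    ‖_root_.row M i‖ ^ 2 = ∑ j, (M i j) ^ 2 := by
  rw [norm_sq_eq]
  exact Finset.sum_congr rfl fun j _ => by rw [row_apply]

lemma frobSq_eq (M : Matrix (Fin m) (Fin n) ℝ) : frobSq M = ∑ i, ‖_root_.row M i‖ ^ 2 := by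
  simp [frobSq, norm_row_sq]

lemma frobSq_nonneg (M : Matrix (Fin m) (Fin n) ℝ) : 0 ≤ frobSq M := by
  rw [frobSq_eq]; positivity

lemma mulVecE_add (M N : Matrix (Fin m) (Fin n) ℝ) (z : EuclideanSpace ℝ (Fin n)) :
    mulVecE (M + N) z = mulVecE M z + mulVecE N z := by
  simp [mulVecE, map_add]

lemma norm_mulVecE_sq (M : Matrix (Fin m) (Fin n) ℝ) (z : EuclideanSpace ℝ (Fin n)) :
    ‖mulVecE M z‖ ^ 2 = ∑ i, ⟪_root_.row M i, z⟫ ^ 2 := by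
  rw [norm_sq_eq]
  exact Finset.sum_congr rfl fun i _ => by rw [inner_row]

lemma norm_mulVecE_sq_le (M : Matrix (Fin m) (Fin n) ℝ) (z : EuclideanSpace ℝ (Fin n)) :
    ‖mulVecE M z‖ ^ 2 ≤ frobSq M * ‖z‖ ^ 2 := by
  rw [norm_mulVecE_sq, frobSq_eq, Finset.sum_mul]
  refine Finset.sum_le_sum fun i _ => ?_
  have h := abs_real_inner_le_norm (_root_.row M i) z
  calc ⟪_root_.row M i, z⟫ ^ 2 = |⟪_root_.row M i, z⟫| ^ 2 := (sq_abs _).symm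
    _ ≤ (‖_root_.row M i‖ * ‖z‖) ^ 2 := by
        apply pow_le_pow_left₀ (abs_nonneg _) h
    _ = ‖_root_.row M i‖ ^ 2 * ‖z‖ ^ 2 := by ring

lemma row_mem_rowSpace (M : Matrix (Fin m) (Fin n) ℝ) (i : Fin m) :
    _root_.row M i ∈ rowSpace M := by
  refine ⟨(WithLp.equiv 2 (Fin m → ℝ)).symm (Pi.single i 1), ?_⟩
  ext j
  show (Mᵀ *ᵥ Pi.single i 1) j = M i j
  simp [Matrix.mulVec_single]

lemma mulVecE_le_specNorm (M : Matrix (Fin m) (Fin n) ℝ) (z : EuclideanSpace ℝ (Fin n)) :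
    ‖mulVecE M z‖ ≤ specNorm M * ‖z‖ :=
  (LinearMap.toContinuousLinearMap (Matrix.toEuclideanLin M)).le_opNorm z

lemma specNorm_nonneg (M : Matrix (Fin m) (Fin n) ℝ) : 0 ≤ specNorm M := norm_nonneg _

lemma toEuclideanLin_transpose (M : Matrix (Fin m) (Fin n) ℝ) :
    Matrix.toEuclideanLin Mᵀ = LinearMap.adjoint (Matrix.toEuclideanLin M) := by
  rw [← Matrix.toEuclideanLin_conjTranspose_eq_adjoint,
    Matrix.conjTranspose_eq_transpose_of_trivial]

lemma inner_transpose (M : Matrix (Fin m) (Fin n) ℝ) (y : EuclideanSpace ℝ (Fin m))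
    (x : EuclideanSpace ℝ (Fin n)) :
    ⟪Matrix.toEuclideanLin Mᵀ y, x⟫ = ⟪y, Matrix.toEuclideanLin M x⟫ := by
  rw [toEuclideanLin_transpose]
  exact LinearMap.adjoint_inner_left _ _ _

lemma specNorm_transpose (M : Matrix (Fin m) (Fin n) ℝ) : specNorm Mᵀ = specNorm M := by
  unfold specNorm
  rw [toEuclideanLin_transpose, LinearMap.adjoint_toContinuousLinearMap]
  exact LinearIsometryEquiv.norm_map ContinuousLinearMap.adjoint _

lemma orthogonal_rowSpace (M : Matrix (Fin m) (Fin n) ℝ) :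
    (rowSpace M)ᗮ = LinearMap.ker (Matrix.toEuclideanLin M) := by
  ext z
  simp only [Submodule.mem_orthogonal, LinearMap.mem_ker, rowSpace, LinearMap.mem_range]
  constructor
  · intro h
    have h2 : ⟪(Matrix.toEuclideanLin M) z, (Matrix.toEuclideanLin M) z⟫ = (0:ℝ) := by
      rw [← inner_transpose M ((Matrix.toEuclideanLin M) z) z]
      exact h _ ⟨_, rfl⟩
    exact inner_self_eq_zero.mp h2
  · intro h u hu
    obtain ⟨y, rfl⟩ := hu
    rw [inner_transpose M y z, h, inner_zero_right]

lemma finrank_range_toEuclideanLin (M : Matrix (Fin m) (Fin n) ℝ) :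
    Module.finrank ℝ (LinearMap.range (Matrix.toEuclideanLin M)) = M.rank := by
  have h : Matrix.toEuclideanLin M =
      ((WithLp.linearEquiv 2 ℝ (Fin m → ℝ)).symm : (Fin m → ℝ) →ₗ[ℝ] _) ∘ₗ
        (M.mulVecLin ∘ₗ ((WithLp.linearEquiv 2 ℝ (Fin n → ℝ)) : _ →ₗ[ℝ] (Fin n → ℝ))) := rfl
  rw [h, LinearMap.range_comp, LinearEquiv.finrank_map_eq, LinearMap.range_comp,
    LinearEquiv.range, Submodule.map_top, Matrix.rank]

lemma finrank_rowSpace (M : Matrix (Fin m) (Fin n) ℝ) :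
    Module.finrank ℝ (rowSpace M) = M.rank := by
  rw [rowSpace, finrank_range_toEuclideanLin, Matrix.rank_transpose]

lemma finrank_ker_add (M : Matrix (Fin m) (Fin n) ℝ) :
    M.rank + Module.finrank ℝ (LinearMap.ker (Matrix.toEuclideanLin M)) = n := by
  have h := LinearMap.finrank_range_add_finrank_ker (Matrix.toEuclideanLin M)
  rw [finrank_range_toEuclideanLin] at h
  rwa [finrank_euclideanSpace_fin] at h

lemma weyl (A E : Matrix (Fin m) (Fin n) ℝ)
    (hrank : (A + E).rank = A.rank) (σ : ℝ)
    (hσA : ∀ z ∈ rowSpace A, σ * ‖z‖ ≤ ‖mulVecE A z‖) :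
    ∀ z ∈ rowSpace (A + E), (σ - specNorm E) * ‖z‖ ≤ ‖mulVecE (A + E) z‖ := by
  set At := A + E with hAt
  by_cases hbot : rowSpace At = ⊥
  · intro z hz
    rw [hbot, Submodule.mem_bot] at hz
    subst hz; simp
  · obtain ⟨v₀, hv₀m, hv₀⟩ := (Submodule.ne_bot_iff _).mp hbot
    set S : Set (EuclideanSpace ℝ (Fin n)) :=
      (rowSpace At : Set (EuclideanSpace ℝ (Fin n))) ∩ Metric.sphere 0 1 with hS
    have hScomp : IsCompact S :=
      ((isCompact_sphere (0 : EuclideanSpace ℝ (Fin n)) 1).inter_left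
        (rowSpace At).closed_of_finiteDimensional)
    have hSne : S.Nonempty := by
      refine ⟨‖v₀‖⁻¹ • v₀, Submodule.smul_mem _ _ hv₀m, ?_⟩
      rw [mem_sphere_zero_iff_norm, norm_smul, norm_inv, norm_norm]
      field_simp [norm_ne_zero_iff.mpr hv₀]
    have hcont : Continuous fun z : EuclideanSpace ℝ (Fin n) => ‖mulVecE At z‖ :=
      ((Matrix.toEuclideanLin At).continuous_of_finiteDimensional).norm
    obtain ⟨v, hvS, hvmin⟩ := hScomp.exists_isMinOn hSne hcont.continuousOn
    have hvmem : v ∈ rowSpace At := hvS.1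
    have hvnorm : ‖v‖ = 1 := mem_sphere_zero_iff_norm.mp hvS.2
    set γ := ‖mulVecE At v‖ with hγ
    have hγ0 : 0 ≤ γ := norm_nonneg _
    have claim1 : ∀ z ∈ rowSpace At, γ * ‖z‖ ≤ ‖mulVecE At z‖ := by
      intro z hz
      rcases eq_or_ne z 0 with rfl | hz0
      · simp [mulVecE]
      · have hzn : (0:ℝ) < ‖z‖ := norm_pos_iff.mpr hz0
        have h1 : (‖z‖⁻¹ • z) ∈ S := by
          refine ⟨Submodule.smul_mem _ _ hz, ?_⟩
          rw [mem_sphere_zero_iff_norm, norm_smul, norm_inv, norm_norm]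
          field_simp
        have h2 := isMinOn_iff.mp hvmin _ h1
        have h3 : mulVecE At (‖z‖⁻¹ • z) = ‖z‖⁻¹ • mulVecE At z := map_smul _ _ _
        rw [h3, norm_smul, norm_inv, norm_norm] at h2
        calc γ * ‖z‖ ≤ (‖z‖⁻¹ * ‖mulVecE At z‖) * ‖z‖ := by
              exact mul_le_mul_of_nonneg_right h2 (le_of_lt hzn)
          _ = ‖mulVecE At z‖ := by field_simp
    have hvne : v ≠ 0 := by
      intro h; rw [h, norm_zero] at hvnorm; norm_num at hvnorm
    set K := LinearMap.ker (Matrix.toEuclideanLin At) with hK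
    have hKorth : K = (rowSpace At)ᗮ := (orthogonal_rowSpace At).symm
    set U := (ℝ ∙ v) ⊔ K with hU
    have hdisj : (ℝ ∙ v) ⊓ K = ⊥ := by
      rw [eq_bot_iff]
      rintro w ⟨hw1, hw2⟩
      obtain ⟨c, rfl⟩ := Submodule.mem_span_singleton.mp hw1
      rcases eq_or_ne c 0 with rfl | hc
      · simp
      · exfalso
        have hvK : v ∈ K := by
          have := Submodule.smul_mem K c⁻¹ hw2
          rwa [smul_smul, inv_mul_cancel₀ hc, one_smul] at this
        rw [hKorth] at hvK
        have := (Submodule.mem_orthogonal _ _).mp hvK v hvmem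
        rw [real_inner_self_eq_norm_sq, hvnorm] at this
        norm_num at this
    have hUfin : Module.finrank ℝ U = 1 + Module.finrank ℝ K := by
      have h := Submodule.finrank_sup_add_finrank_inf_eq (ℝ ∙ v) K
      rw [hdisj, finrank_span_singleton hvne] at h
      simpa using h
    have hWU : rowSpace A ⊓ U ≠ ⊥ := by
      intro hcon
      have h := Submodule.finrank_sup_add_finrank_inf_eq (rowSpace A) U
      rw [hcon, hUfin, finrank_rowSpace] at h
      have h2 : Module.finrank ℝ (rowSpace A ⊔ U : Submodule ℝ (EuclideanSpace ℝ (Fin n)))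
          ≤ n := by
        have := Submodule.finrank_le (rowSpace A ⊔ U : Submodule ℝ (EuclideanSpace ℝ (Fin n)))
        rwa [finrank_euclideanSpace_fin] at this
      have h3 := finrank_ker_add At
      rw [hrank, ← hK] at h3
      rw [show Module.finrank ℝ (⊥ : Submodule ℝ (EuclideanSpace ℝ (Fin n))) = 0
        from finrank_bot ℝ _, add_zero] at h
      omega
    obtain ⟨w, hwmem, hw0⟩ := (Submodule.ne_bot_iff _).mp hWU
    have hwA : w ∈ rowSpace A := hwmem.1
    obtain ⟨y, hy, u, hu, hyu⟩ := Submodule.mem_sup.mp hwmem.2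
    obtain ⟨a, rfl⟩ := Submodule.mem_span_singleton.mp hy
    have hvu : ⟪v, u⟫ = 0 := by
      rw [hKorth] at hu
      exact (Submodule.mem_orthogonal _ _).mp hu v hvmem
    have hAtw : mulVecE At w = a • mulVecE At v := by
      rw [← hyu]
      have hu0 : Matrix.toEuclideanLin At u = 0 := hu
      show Matrix.toEuclideanLin At (a • v + u) = _
      rw [map_add, LinearMap.map_smul, hu0, add_zero]; rfl
    have hwpos : (0:ℝ) < ‖w‖ := norm_pos_iff.mpr hw0
    have habs : |a| ≤ ‖w‖ := by
      have hsq : ‖w‖ ^ 2 = a ^ 2 + ‖u‖ ^ 2 := by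
        rw [← hyu, ← real_inner_self_eq_norm_sq, real_inner_add_add_self,
          real_inner_smul_left, real_inner_smul_right, real_inner_smul_left, hvu,
          real_inner_self_eq_norm_sq, hvnorm, real_inner_self_eq_norm_sq]
        ring
      nlinarith [abs_nonneg a, sq_abs a, sq_nonneg ‖u‖]
    have h1 : σ * ‖w‖ ≤ ‖mulVecE A w‖ := hσA w hwA
    have h2 : ‖mulVecE E w‖ ≤ specNorm E * ‖w‖ := mulVecE_le_specNorm E w
    have h3 : ‖mulVecE A w‖ ≤ ‖mulVecE At w‖ + ‖mulVecE E w‖ := by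
      have hEq : mulVecE A w = mulVecE At w - mulVecE E w := by
        rw [hAt, mulVecE_add]; abel
      rw [hEq]; exact norm_sub_le _ _
    have h4 : ‖mulVecE At w‖ = |a| * γ := by rw [hAtw, norm_smul, Real.norm_eq_abs]
    have h5 : ‖mulVecE At w‖ ≤ γ * ‖w‖ := by
      rw [h4, mul_comm]
      exact mul_le_mul_of_nonneg_left habs hγ0
    have hwchain : (σ - specNorm E) * ‖w‖ ≤ γ * ‖w‖ := by nlinarith
    have claim2 : σ - specNorm E ≤ γ := le_of_mul_le_mul_right hwchain hwpos
    intro z hz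
    calc (σ - specNorm E) * ‖z‖ ≤ γ * ‖z‖ :=
          mul_le_mul_of_nonneg_right claim2 (norm_nonneg z)
      _ ≤ ‖mulVecE At z‖ := claim1 z hz

lemma transpose_lower (M : Matrix (Fin m) (Fin n) ℝ) (σ : ℝ) (hσ0 : 0 ≤ σ)
    (hσ : ∀ z ∈ rowSpace M, σ * ‖z‖ ≤ ‖mulVecE M z‖) :
    ∀ y ∈ LinearMap.range (Matrix.toEuclideanLin M), σ * ‖y‖ ≤ ‖mulVecE Mᵀ y‖ := by
  rintro y ⟨x₀, rfl⟩
  set y := Matrix.toEuclideanLin M x₀ with hy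
  rcases eq_or_ne y 0 with h0 | h0
  · rw [h0]; simp
  · set p : EuclideanSpace ℝ (Fin n) := (↑(Submodule.orthogonalProjectionOnto (rowSpace M) x₀) : EuclideanSpace ℝ (Fin n)) with hp
    have hq : x₀ - p ∈ (rowSpace M)ᗮ := Submodule.sub_starProjection_mem_orthogonal x₀
    rw [orthogonal_rowSpace] at hq
    have hMp : Matrix.toEuclideanLin M p = y := by
      have : Matrix.toEuclideanLin M (x₀ - p) = 0 := hq
      rw [map_sub] at this
      have := sub_eq_zero.mp this
      rw [← this]
    have hpmem : p ∈ rowSpace M := Submodule.coe_mem _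
    have h1 : σ * ‖p‖ ≤ ‖y‖ := by
      have := hσ p hpmem
      rwa [show mulVecE M p = Matrix.toEuclideanLin M p from rfl, hMp] at this
    have h2 : ‖y‖ ^ 2 ≤ ‖mulVecE Mᵀ y‖ * ‖p‖ := by
      have hi : ⟪mulVecE Mᵀ y, p⟫ = ‖y‖ ^ 2 := by
        rw [show mulVecE Mᵀ y = Matrix.toEuclideanLin Mᵀ y from rfl, inner_transpose, hMp,
          real_inner_self_eq_norm_sq]
      calc ‖y‖ ^ 2 = ⟪mulVecE Mᵀ y, p⟫ := hi.symm
        _ ≤ ‖mulVecE Mᵀ y‖ * ‖p‖ := real_inner_le_norm _ _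
    have hyn : (0:ℝ) < ‖y‖ := norm_pos_iff.mpr h0
    nlinarith [mul_le_mul_of_nonneg_left h2 hσ0,
      mul_le_mul_of_nonneg_left h1 (norm_nonneg (mulVecE Mᵀ y)), hyn]

lemma pnls_close (A E : Matrix (Fin m) (Fin n) ℝ)
    (hrank : (A + E).rank = A.rank)
    (σ : ℝ) (hσ : 0 < σ)
    (hσA : ∀ z ∈ rowSpace A, σ * ‖z‖ ≤ ‖mulVecE A z‖)
    (hE : specNorm E < σ)
    (xLS : EuclideanSpace ℝ (Fin n)) (hxLS : xLS ∈ rowSpace A)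
    (xPNLS : EuclideanSpace ℝ (Fin n))
    (hPNLS : mulVecE (A + E) xPNLS = mulVecE A xLS)
    (hxPNLS : xPNLS ∈ rowSpace (A + E)) :
    ‖xPNLS - xLS‖ ≤ 2 * ‖xLS‖ * (specNorm E / σ) / (1 - specNorm E / σ) := by
  set At := A + E with hAt
  set e := specNorm E with he
  have he0 : 0 ≤ e := specNorm_nonneg E
  have hσe : (0:ℝ) < σ - e := by linarith
  set d := xPNLS - xLS with hd
  -- image of d under At
  have hAtd : mulVecE At d = - mulVecE E xLS := by
    have : mulVecE At d = mulVecE At xPNLS - mulVecE At xLS := map_sub _ _ _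
    rw [this, hPNLS, hAt, mulVecE_add]
    abel
  set P : EuclideanSpace ℝ (Fin n) := (↑(Submodule.orthogonalProjectionOnto (rowSpace At) d) : EuclideanSpace ℝ (Fin n)) with hP
  set q : EuclideanSpace ℝ (Fin n) := d - P with hq
  have hqorth : q ∈ (rowSpace At)ᗮ := Submodule.sub_starProjection_mem_orthogonal d
  have hqker : mulVecE At q = 0 := by
    have := hqorth; rw [orthogonal_rowSpace] at this; exact this
  have hAtP : mulVecE At P = mulVecE At d := by
    have h := map_sub (Matrix.toEuclideanLin At) d P
    have h2 : Matrix.toEuclideanLin At (d - P) = 0 := hqker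
    rw [h2] at h
    exact (sub_eq_zero.mp h.symm).symm
  have hPmem : P ∈ rowSpace At := Submodule.coe_mem _
  -- bound on P
  have hPbound : ‖P‖ ≤ e * ‖xLS‖ / (σ - e) := by
    have h1 := weyl A E hrank σ hσA P hPmem
    rw [← hAt, hAtP, hAtd, norm_neg] at h1
    have h2 : ‖mulVecE E xLS‖ ≤ e * ‖xLS‖ := mulVecE_le_specNorm E xLS
    rw [le_div_iff₀ hσe]
    nlinarith
  -- q equals the orthogonal complement part of xLS
  set pr : EuclideanSpace ℝ (Fin n) :=
    (↑(Submodule.orthogonalProjectionOnto (rowSpace At) xLS) : EuclideanSpace ℝ (Fin n)) with hpr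
  have hproj : (↑(Submodule.orthogonalProjectionOnto (rowSpace At) d) : EuclideanSpace ℝ (Fin n))
      = xPNLS - pr := by
    rw [hd, map_sub, Submodule.coe_sub, show ((rowSpace At).orthogonalProjectionOnto xPNLS : EuclideanSpace ℝ (Fin n)) = xPNLS from Submodule.starProjection_eq_self_iff.mpr hxPNLS, hpr]
  have hqeq : q = pr - xLS := by
    rw [hq, hP, hproj, hd]
    abel
  -- find y with xLS = Aᵀ y, y in column space of A
  obtain ⟨y₀, hy₀⟩ := hxLS
  set y : EuclideanSpace ℝ (Fin m) :=
    (↑(Submodule.orthogonalProjectionOnto (LinearMap.range (Matrix.toEuclideanLin A)) y₀) :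
      EuclideanSpace ℝ (Fin m)) with hyd
  have hymem : y ∈ LinearMap.range (Matrix.toEuclideanLin A) := Submodule.coe_mem _
  have hAty : Matrix.toEuclideanLin Aᵀ y = xLS := by
    have horth : y₀ - y ∈ (LinearMap.range (Matrix.toEuclideanLin A))ᗮ :=
      Submodule.sub_starProjection_mem_orthogonal y₀
    have hrsA : LinearMap.range (Matrix.toEuclideanLin A) = rowSpace Aᵀ := by
      rw [rowSpace, Matrix.transpose_transpose]
    rw [hrsA, orthogonal_rowSpace] at horth
    have h0 : Matrix.toEuclideanLin Aᵀ (y₀ - y) = 0 := horth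
    rw [map_sub, sub_eq_zero] at h0
    rw [← h0, hy₀]
  have hybound : σ * ‖y‖ ≤ ‖xLS‖ := by
    have := transpose_lower A σ (le_of_lt hσ) hσA y hymem
    rwa [show mulVecE Aᵀ y = Matrix.toEuclideanLin Aᵀ y from rfl, hAty] at this
  -- bound on q via closest point property
  have hqbound : ‖q‖ ≤ e * ‖xLS‖ / σ := by
    set r : EuclideanSpace ℝ (Fin n) := Matrix.toEuclideanLin Atᵀ y with hr
    have hrmem : r ∈ rowSpace At := ⟨y, rfl⟩
    have hxr : ‖xLS - r‖ ≤ e * ‖xLS‖ / σ := by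
      have hadd : Matrix.toEuclideanLin (Aᵀ + Eᵀ) y
          = Matrix.toEuclideanLin Aᵀ y + Matrix.toEuclideanLin Eᵀ y := by
        rw [map_add]; rfl
      have hsub : xLS - r = - (Matrix.toEuclideanLin Eᵀ y) := by
        rw [hr, hAt, Matrix.transpose_add, hadd, hAty]
        abel
      rw [hsub, norm_neg]
      have h1 : ‖mulVecE Eᵀ y‖ ≤ specNorm Eᵀ * ‖y‖ := mulVecE_le_specNorm Eᵀ y
      rw [specNorm_transpose, ← he] at h1
      have h2 : ‖y‖ ≤ ‖xLS‖ / σ := by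
        rw [le_div_iff₀ hσ]
        linarith [hybound]
      calc ‖Matrix.toEuclideanLin Eᵀ y‖ = ‖mulVecE Eᵀ y‖ := rfl
        _ ≤ e * ‖y‖ := h1
        _ ≤ e * (‖xLS‖ / σ) := by
            exact mul_le_mul_of_nonneg_left h2 he0
        _ = e * ‖xLS‖ / σ := by ring
    have hmin : ‖xLS - pr‖ ≤ ‖xLS - r‖ := by
      have h1 : xLS - pr ∈ (rowSpace At)ᗮ := Submodule.sub_starProjection_mem_orthogonal xLS
      have h2 : pr - r ∈ rowSpace At := Submodule.sub_mem _ (Submodule.coe_mem _) hrmem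
      have hzero : ⟪xLS - pr, pr - r⟫ = 0 := Submodule.inner_left_of_mem_orthogonal h2 h1
      have hdecomp : xLS - r = (xLS - pr) + (pr - r) := by abel
      have hpyth : ‖xLS - r‖ ^ 2 = ‖xLS - pr‖ ^ 2 + ‖pr - r‖ ^ 2 := by
        rw [hdecomp, ← real_inner_self_eq_norm_sq, real_inner_add_add_self, hzero,
          real_inner_self_eq_norm_sq, real_inner_self_eq_norm_sq]
        ring
      nlinarith [norm_nonneg (xLS - r), norm_nonneg (xLS - pr), sq_nonneg ‖pr - r‖]
    calc ‖q‖ = ‖xLS - pr‖ := by rw [hqeq, norm_sub_rev]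
      _ ≤ ‖xLS - r‖ := hmin
      _ ≤ e * ‖xLS‖ / σ := hxr
  have htri : ‖d‖ ≤ ‖P‖ + ‖q‖ := by
    have hdPq : d = P + q := by rw [hq]; abel
    rw [hdPq]; exact norm_add_le _ _
  have hmono : e * ‖xLS‖ / σ ≤ e * ‖xLS‖ / (σ - e) := by
    apply div_le_div_of_nonneg_left (by positivity) hσe (by linarith)
  have heq : 2 * ‖xLS‖ * (e / σ) / (1 - e / σ)
      = e * ‖xLS‖ / (σ - e) + e * ‖xLS‖ / (σ - e) := by
    have h1 : σ ≠ 0 := ne_of_gt hσ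
    have h2 : (1:ℝ) - e / σ ≠ 0 := by
      have : e / σ < 1 := (div_lt_one hσ).mpr (by linarith)
      linarith
    field_simp
    ring
  rw [show (2:ℝ) * ‖xLS‖ * (specNorm E / σ) / (1 - specNorm E / σ)
    = 2 * ‖xLS‖ * (e / σ) / (1 - e / σ) from rfl, heq]
  linarith

lemma kaczmarz_err (M : Matrix (Fin m) (Fin n) ℝ) (xstar : EuclideanSpace ℝ (Fin n))
    (εv : Fin m → ℝ) (i : Fin m) (hr : _root_.row M i ≠ 0) (x : EuclideanSpace ℝ (Fin n)) :
    ‖kaczmarz M (fun j => mulVecE M xstar j + εv j) i x - xstar‖ ^ 2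
      = ‖x - xstar‖ ^ 2 - ⟪_root_.row M i, x - xstar⟫ ^ 2 / ‖_root_.row M i‖ ^ 2
        + (εv i) ^ 2 / ‖_root_.row M i‖ ^ 2 := by
  set a := _root_.row M i with ha
  set s := ‖a‖ ^ 2 with hs
  have hs0 : s ≠ 0 := by
    rw [hs]
    exact pow_ne_zero 2 (norm_ne_zero_iff.mpr hr)
  set ev : EuclideanSpace ℝ (Fin n) := x - xstar with hev
  set g := ⟪a, ev⟫ with hg
  have hinner : ⟪a, x⟫ - (mulVecE M xstar i + εv i) = g - εv i := by
    rw [hg, hev, inner_sub_right, ← inner_row]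
    ring
  have hkacz : kaczmarz M (fun j => mulVecE M xstar j + εv j) i x - xstar
      = ev - ((g - εv i) / s) • a := by
    rw [kaczmarz, ← ha, ← hs, hinner, hev]
    abel
  rw [hkacz]
  have hexp : ‖ev - ((g - εv i) / s) • a‖ ^ 2
      = ‖ev‖ ^ 2 - 2 * ((g - εv i) / s) * g + ((g - εv i) / s) ^ 2 * s := by
    rw [← real_inner_self_eq_norm_sq, inner_sub_sub_self, real_inner_smul_left,
      real_inner_smul_right, real_inner_smul_left, real_inner_smul_right,
      real_inner_self_eq_norm_sq, real_inner_self_eq_norm_sq, ← hs,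
      real_inner_comm a ev, ← hg]
    ring
  rw [hexp]
  field_simp
  ring

lemma kaczmarz_mem (M : Matrix (Fin m) (Fin n) ℝ) (c : Fin m → ℝ) (i : Fin m)
    (x xstar : EuclideanSpace ℝ (Fin n)) (h : x - xstar ∈ rowSpace M) :
    kaczmarz M c i x - xstar ∈ rowSpace M := by
  rw [kaczmarz]
  have : x - ((⟪_root_.row M i, x⟫ - c i) / ‖_root_.row M i‖ ^ 2) • _root_.row M i - xstar
      = (x - xstar) - ((⟪_root_.row M i, x⟫ - c i) / ‖_root_.row M i‖ ^ 2) • _root_.row M i := by abel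
  rw [this]
  exact Submodule.sub_mem _ h (Submodule.smul_mem _ _ (row_mem_rowSpace M i))

lemma frobSq_pos (M : Matrix (Fin m) (Fin n) ℝ) (hrow : ∀ i, _root_.row M i ≠ 0) (hm : 0 < m) :
    0 < frobSq M := by
  rw [frobSq_eq]
  refine Finset.sum_pos (fun i _ => pow_pos (norm_pos_iff.mpr (hrow i)) 2)
    ⟨⟨0, hm⟩, Finset.mem_univ _⟩

lemma psum_le_one (M : Matrix (Fin m) (Fin n) ℝ) (hrow : ∀ i, _root_.row M i ≠ 0) :
    ∑ i, ‖_root_.row M i‖ ^ 2 / frobSq M ≤ 1 := by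
  rcases Nat.eq_zero_or_pos m with hm | hm
  · subst hm; simp
  · rw [← Finset.sum_div, ← frobSq_eq, div_self (ne_of_gt (frobSq_pos M hrow hm))]

lemma alpha_nonneg (M : Matrix (Fin m) (Fin n) ℝ) (hrow : ∀ i, _root_.row M i ≠ 0)
    (σt : ℝ) (hσt : 0 ≤ σt)
    (hσtM : ∀ z ∈ rowSpace M, σt * ‖z‖ ≤ ‖mulVecE M z‖) :
    0 ≤ 1 - σt ^ 2 / frobSq M := by
  rcases Nat.eq_zero_or_pos m with hm | hm
  · subst hm
    have hF : frobSq M = (0:ℝ) := by simp [frobSq]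
    rw [hF, div_zero]
    norm_num
  · have hF := frobSq_pos M hrow hm
    set z := _root_.row M (⟨0, hm⟩ : Fin m) with hz
    have h1 := hσtM z (row_mem_rowSpace M _)
    have h2 := norm_mulVecE_sq_le M z
    have hzpos : 0 < ‖z‖ := norm_pos_iff.mpr (hrow _)
    have h4 : σt ^ 2 ≤ frobSq M := by
      nlinarith [mul_self_le_mul_self (by positivity : (0:ℝ) ≤ σt * ‖z‖) h1, h2,
        mul_pos hzpos hzpos, sq_nonneg (σt * ‖z‖)]
    have h5 : σt ^ 2 / frobSq M ≤ 1 := (div_le_one hF).mpr h4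
    linarith

lemma exp_step (M : Matrix (Fin m) (Fin n) ℝ) (hrow : ∀ i, _root_.row M i ≠ 0)
    (σt : ℝ) (hσt : 0 ≤ σt)
    (hσtM : ∀ z ∈ rowSpace M, σt * ‖z‖ ≤ ‖mulVecE M z‖)
    (xstar : EuclideanSpace ℝ (Fin n)) (εv : Fin m → ℝ)
    (x : EuclideanSpace ℝ (Fin n)) (hx : x - xstar ∈ rowSpace M) :
    ∑ i, (‖_root_.row M i‖ ^ 2 / frobSq M) *
        ‖kaczmarz M (fun j => mulVecE M xstar j + εv j) i x - xstar‖ ^ 2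
      ≤ (1 - σt ^ 2 / frobSq M) * ‖x - xstar‖ ^ 2 + (∑ i, (εv i) ^ 2) / frobSq M := by
  rcases Nat.eq_zero_or_pos m with hm | hm
  · subst hm
    have hF : frobSq M = (0:ℝ) := by simp [frobSq]
    simp [hF]
  · have hF := frobSq_pos M hrow hm
    have hterm : ∀ i : Fin m, (‖_root_.row M i‖ ^ 2 / frobSq M) *
        ‖kaczmarz M (fun j => mulVecE M xstar j + εv j) i x - xstar‖ ^ 2
        = (‖_root_.row M i‖ ^ 2 / frobSq M) * ‖x - xstar‖ ^ 2
          - ⟪_root_.row M i, x - xstar⟫ ^ 2 / frobSq M + (εv i) ^ 2 / frobSq M := by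
      intro i
      rw [kaczmarz_err M xstar εv i (hrow i) x]
      have hs0 : ‖_root_.row M i‖ ^ 2 ≠ 0 := pow_ne_zero 2 (norm_ne_zero_iff.mpr (hrow i))
      have hn0 : ‖_root_.row M i‖ ≠ 0 := norm_ne_zero_iff.mpr (hrow i)
      field_simp
    rw [Finset.sum_congr rfl fun i _ => hterm i, Finset.sum_add_distrib,
      Finset.sum_sub_distrib]
    have e1 : ∑ i : Fin m, (‖_root_.row M i‖ ^ 2 / frobSq M) * ‖x - xstar‖ ^ 2
        = ‖x - xstar‖ ^ 2 := by
      rw [← Finset.sum_mul, ← Finset.sum_div, ← frobSq_eq, div_self (ne_of_gt hF), one_mul]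
    have e2 : ∑ i : Fin m, ⟪_root_.row M i, x - xstar⟫ ^ 2 / frobSq M
        = ‖mulVecE M (x - xstar)‖ ^ 2 / frobSq M := by
      rw [← Finset.sum_div, ← norm_mulVecE_sq]
    have e3 : ∑ i : Fin m, (εv i) ^ 2 / frobSq M = (∑ i, (εv i) ^ 2) / frobSq M :=
      (Finset.sum_div _ _ _).symm
    rw [e1, e2, e3]
    have h1 := hσtM _ hx
    have h2 : σt ^ 2 * ‖x - xstar‖ ^ 2 ≤ ‖mulVecE M (x - xstar)‖ ^ 2 := by
      nlinarith [mul_self_le_mul_self (by positivity : (0:ℝ) ≤ σt * ‖x - xstar‖) h1]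
    have h3 : σt ^ 2 * ‖x - xstar‖ ^ 2 / frobSq M
        ≤ ‖mulVecE M (x - xstar)‖ ^ 2 / frobSq M := by gcongr
    have h4 : (1 - σt ^ 2 / frobSq M) * ‖x - xstar‖ ^ 2
        = ‖x - xstar‖ ^ 2 - σt ^ 2 * ‖x - xstar‖ ^ 2 / frobSq M := by ring
    linarith

lemma kaczmarzIter_cons {k : ℕ} (M : Matrix (Fin m) (Fin n) ℝ) (c : Fin m → ℝ)
    (i : Fin m) (is : Fin k → Fin m) (x0 : EuclideanSpace ℝ (Fin n)) :
    kaczmarzIter M c (Fin.cons i is) x0 = kaczmarzIter M c is (kaczmarz M c i x0) := by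
  unfold kaczmarzIter
  rw [List.ofFn_succ]
  simp [Fin.cons_zero, Fin.cons_succ]

lemma rk_iter_sq (M : Matrix (Fin m) (Fin n) ℝ) (hrow : ∀ i, _root_.row M i ≠ 0)
    (σt : ℝ) (hσt : 0 ≤ σt)
    (hσtM : ∀ z ∈ rowSpace M, σt * ‖z‖ ≤ ‖mulVecE M z‖)
    (xstar : EuclideanSpace ℝ (Fin n)) (εv : Fin m → ℝ) :
    ∀ (k : ℕ) (x0 : EuclideanSpace ℝ (Fin n)), x0 - xstar ∈ rowSpace M →
    ∑ is : Fin k → Fin m, (∏ j, ‖_root_.row M (is j)‖ ^ 2 / frobSq M) *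
        ‖kaczmarzIter M (fun j => mulVecE M xstar j + εv j) is x0 - xstar‖ ^ 2
      ≤ (1 - σt ^ 2 / frobSq M) ^ k * ‖x0 - xstar‖ ^ 2
        + (∑ j ∈ Finset.range k, (1 - σt ^ 2 / frobSq M) ^ j)
            * ((∑ i, (εv i) ^ 2) / frobSq M) := by
  intro k
  induction k with
  | zero =>
    intro x0 hx0
    have hconst : ∀ is : Fin 0 → Fin m, (∏ j, ‖_root_.row M (is j)‖ ^ 2 / frobSq M) *
        ‖kaczmarzIter M (fun j => mulVecE M xstar j + εv j) is x0 - xstar‖ ^ 2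
        = ‖x0 - xstar‖ ^ 2 := by
      intro is
      rw [show kaczmarzIter M (fun j => mulVecE M xstar j + εv j) is x0 = x0 from rfl]
      simp
    rw [Finset.sum_congr rfl fun is _ => hconst is, Finset.sum_const]
    simp
  | succ k ih =>
    intro x0 hx0
    set α := 1 - σt ^ 2 / frobSq M with hα
    have hα0 : 0 ≤ α := alpha_nonneg M hrow σt hσt hσtM
    set cn := (∑ i, (εv i) ^ 2) / frobSq M with hcn
    have hcn0 : 0 ≤ cn := div_nonneg (by positivity) (frobSq_nonneg M)
    set b := fun j => mulVecE M xstar j + εv j with hb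
    set G := ∑ j ∈ Finset.range k, α ^ j with hG
    have hG0 : 0 ≤ G := Finset.sum_nonneg fun j _ => pow_nonneg hα0 j
    have hp0 : ∀ i : Fin m, 0 ≤ ‖_root_.row M i‖ ^ 2 / frobSq M :=
      fun i => div_nonneg (by positivity) (frobSq_nonneg M)
    have hre : ∑ is : Fin (k+1) → Fin m, (∏ j, ‖_root_.row M (is j)‖ ^ 2 / frobSq M) *
          ‖kaczmarzIter M b is x0 - xstar‖ ^ 2
        = ∑ i : Fin m, ∑ is : Fin k → Fin m,
            ((‖_root_.row M i‖ ^ 2 / frobSq M) * ∏ j, ‖_root_.row M (is j)‖ ^ 2 / frobSq M) *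
              ‖kaczmarzIter M b is (kaczmarz M b i x0) - xstar‖ ^ 2 := by
      rw [← Equiv.sum_comp (Fin.consEquiv fun _ : Fin (k+1) => Fin m)
        (fun is : Fin (k+1) → Fin m => (∏ j, ‖_root_.row M (is j)‖ ^ 2 / frobSq M) *
          ‖kaczmarzIter M b is x0 - xstar‖ ^ 2), Fintype.sum_prod_type]
      refine Finset.sum_congr rfl fun i _ => Finset.sum_congr rfl fun is _ => ?_
      have hcons : (Fin.consEquiv fun _ : Fin (k+1) => Fin m) (i, is) = Fin.cons i is := rfl
      rw [hcons, kaczmarzIter_cons]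
      congr 1
      have hfun : (fun j : Fin (k+1) => ‖_root_.row M ((Fin.cons i is : Fin (k+1) → Fin m) j)‖ ^ 2
            / frobSq M)
          = Fin.cons (‖_root_.row M i‖ ^ 2 / frobSq M)
              (fun j : Fin k => ‖_root_.row M (is j)‖ ^ 2 / frobSq M) := by
        funext j
        induction j using Fin.cases with
        | zero => simp
        | succ j => simp
      calc (∏ j, ‖_root_.row M ((Fin.cons i is : Fin (k+1) → Fin m) j)‖ ^ 2 / frobSq M)
          = ∏ j, (Fin.cons (‖_root_.row M i‖ ^ 2 / frobSq M)
              (fun j : Fin k => ‖_root_.row M (is j)‖ ^ 2 / frobSq M) : Fin (k+1) → ℝ) j := by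
            rw [hfun]
        _ = (‖_root_.row M i‖ ^ 2 / frobSq M) * ∏ j, ‖_root_.row M (is j)‖ ^ 2 / frobSq M :=
            Fin.prod_cons _ _
    rw [hre]
    have hinner : ∀ i : Fin m,
        ∑ is : Fin k → Fin m, ((‖_root_.row M i‖ ^ 2 / frobSq M) *
            ∏ j, ‖_root_.row M (is j)‖ ^ 2 / frobSq M) *
          ‖kaczmarzIter M b is (kaczmarz M b i x0) - xstar‖ ^ 2
        = (‖_root_.row M i‖ ^ 2 / frobSq M) * ∑ is : Fin k → Fin m,
            (∏ j, ‖_root_.row M (is j)‖ ^ 2 / frobSq M) *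
              ‖kaczmarzIter M b is (kaczmarz M b i x0) - xstar‖ ^ 2 := by
      intro i
      rw [Finset.mul_sum]
      exact Finset.sum_congr rfl fun is _ => by ring
    rw [Finset.sum_congr rfl fun i _ => hinner i]
    have hih : ∀ i : Fin m,
        (∑ is : Fin k → Fin m, (∏ j, ‖_root_.row M (is j)‖ ^ 2 / frobSq M) *
          ‖kaczmarzIter M b is (kaczmarz M b i x0) - xstar‖ ^ 2)
        ≤ α ^ k * ‖kaczmarz M b i x0 - xstar‖ ^ 2 + G * cn := by
      intro i
      exact ih (kaczmarz M b i x0) (kaczmarz_mem M b i x0 xstar hx0)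
    calc ∑ i : Fin m, (‖_root_.row M i‖ ^ 2 / frobSq M) * ∑ is : Fin k → Fin m,
            (∏ j, ‖_root_.row M (is j)‖ ^ 2 / frobSq M) *
              ‖kaczmarzIter M b is (kaczmarz M b i x0) - xstar‖ ^ 2
        ≤ ∑ i : Fin m, (‖_root_.row M i‖ ^ 2 / frobSq M) *
            (α ^ k * ‖kaczmarz M b i x0 - xstar‖ ^ 2 + G * cn) :=
          Finset.sum_le_sum fun i _ => mul_le_mul_of_nonneg_left (hih i) (hp0 i)
      _ = α ^ k * (∑ i : Fin m, (‖_root_.row M i‖ ^ 2 / frobSq M) *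
            ‖kaczmarz M b i x0 - xstar‖ ^ 2)
          + (∑ i : Fin m, ‖_root_.row M i‖ ^ 2 / frobSq M) * (G * cn) := by
          rw [eq_comm, Finset.mul_sum, Finset.sum_mul, ← Finset.sum_add_distrib]
          exact Finset.sum_congr rfl fun i _ => by ring
      _ ≤ α ^ k * (α * ‖x0 - xstar‖ ^ 2 + cn) + 1 * (G * cn) := by
          have h1 := exp_step M hrow σt hσt hσtM xstar εv x0 hx0
          have h2 := psum_le_one M hrow
          have hGc : 0 ≤ G * cn := mul_nonneg hG0 hcn0
          have h3 : (∑ i : Fin m, (‖_root_.row M i‖ ^ 2 / frobSq M) *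
              ‖kaczmarz M b i x0 - xstar‖ ^ 2) ≤ α * ‖x0 - xstar‖ ^ 2 + cn := h1
          exact add_le_add (mul_le_mul_of_nonneg_left h3 (pow_nonneg hα0 k))
            (mul_le_mul_of_nonneg_right h2 hGc)
      _ = α ^ (k+1) * ‖x0 - xstar‖ ^ 2
          + (∑ j ∈ Finset.range (k+1), α ^ j) * cn := by
          rw [Finset.sum_range_succ, ← hG]
          ring

lemma jensen {ι : Type*} [Fintype ι] (P a : ι → ℝ) (hP : ∀ i, 0 ≤ P i)
    (hP1 : ∑ i, P i ≤ 1) (ha : ∀ i, 0 ≤ a i) (B : ℝ) (hB : 0 ≤ B)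
    (h : ∑ i, P i * (a i) ^ 2 ≤ B ^ 2) : ∑ i, P i * a i ≤ B := by
  have hcs := Finset.sum_mul_sq_le_sq_mul_sq Finset.univ
    (fun i => Real.sqrt (P i)) (fun i => Real.sqrt (P i) * a i)
  have he1 : ∀ i : ι, Real.sqrt (P i) * (Real.sqrt (P i) * a i) = P i * a i := fun i => by
    rw [← mul_assoc, Real.mul_self_sqrt (hP i)]
  have he2 : ∀ i : ι, Real.sqrt (P i) ^ 2 = P i := fun i => Real.sq_sqrt (hP i)
  have he3 : ∀ i : ι, (Real.sqrt (P i) * a i) ^ 2 = P i * (a i) ^ 2 := fun i => by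
    rw [mul_pow, he2 i]
  rw [Finset.sum_congr rfl fun i _ => he1 i, Finset.sum_congr rfl fun i _ => he2 i,
    Finset.sum_congr rfl fun i _ => he3 i] at hcs
  have hs2 : 0 ≤ ∑ i, P i * (a i) ^ 2 :=
    Finset.sum_nonneg fun i _ => mul_nonneg (hP i) (sq_nonneg _)
  have h2 : 0 ≤ ∑ i, P i * a i :=
    Finset.sum_nonneg fun i _ => mul_nonneg (hP i) (ha i)
  nlinarith [hcs]

end RKaux

/-- Randomized Kaczmarz via the partially noisy system: `Ã = A + E` with
`rank(A+E) = rank(A)` and `‖E‖ < σ`; the partially noisy system `Ã x = b` is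
consistent with minimum-norm solution `x_PNLS`, while RK is run on `Ã x ≈ b̃`
with `b̃ = b + ε`, `b = A x_LS`. The left-hand side is the expectation
`E‖x_k - x_LS‖`. -/
theorem rk_via_partially_noisy_system {m n : ℕ}
    (A E : Matrix (Fin m) (Fin n) ℝ)
    (hrank : (A + E).rank = A.rank)
    (hrow : ∀ i, _root_.row (A + E) i ≠ 0)
    (σ : ℝ) (hσ : 0 < σ)
    (hσA : ∀ z ∈ rowSpace A, σ * ‖z‖ ≤ ‖mulVecE A z‖)
    (hE : specNorm E < σ)
    (σt : ℝ) (hσt : 0 < σt)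
    (hσtA : ∀ z ∈ rowSpace (A + E), σt * ‖z‖ ≤ ‖mulVecE (A + E) z‖)
    (xLS : EuclideanSpace ℝ (Fin n)) (hxLS : xLS ∈ rowSpace A)
    (xPNLS : EuclideanSpace ℝ (Fin n))
    (hPNLS : mulVecE (A + E) xPNLS = mulVecE A xLS)
    (hxPNLS : xPNLS ∈ rowSpace (A + E))
    (ε : EuclideanSpace ℝ (Fin m))
    (x0 : EuclideanSpace ℝ (Fin n)) (hx0 : x0 ∈ rowSpace (A + E))
    (k : ℕ) :
    ∑ is : Fin k → Fin m,
        (∏ j, ‖_root_.row (A + E) (is j)‖ ^ 2 / frobSq (A + E)) *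
          ‖kaczmarzIter (A + E) (fun j => mulVecE A xLS j + ε j) is x0 - xLS‖
      ≤ Real.sqrt ((1 - σt ^ 2 / frobSq (A + E)) ^ k) * ‖x0 - xPNLS‖
        + 2 * ‖xLS‖ * (specNorm E / σ) / (1 - specNorm E / σ)
        + ‖ε‖ / σt := by
  classical
  have hσt0 : 0 ≤ σt := le_of_lt hσt
  have hα0 : 0 ≤ 1 - σt ^ 2 / frobSq (A + E) :=
    RKaux.alpha_nonneg (A + E) hrow σt hσt0 hσtA
  have hDb : ‖xPNLS - xLS‖ ≤ 2 * ‖xLS‖ * (specNorm E / σ) / (1 - specNorm E / σ) :=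
    RKaux.pnls_close A E hrank σ hσ hσA hE xLS hxLS xPNLS hPNLS hxPNLS
  have hPnn : ∀ is : Fin k → Fin m,
      0 ≤ ∏ j, ‖_root_.row (A + E) (is j)‖ ^ 2 / frobSq (A + E) :=
    fun is => Finset.prod_nonneg fun j _ =>
      div_nonneg (by positivity) (RKaux.frobSq_nonneg (A + E))
  have hP1 : ∑ is : Fin k → Fin m,
      (∏ j, ‖_root_.row (A + E) (is j)‖ ^ 2 / frobSq (A + E)) ≤ 1 := by
    have hps := Finset.prod_univ_sum (fun _ : Fin k => (Finset.univ : Finset (Fin m)))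
      (fun _ i => ‖_root_.row (A + E) i‖ ^ 2 / frobSq (A + E))
    rw [Fintype.piFinset_univ] at hps
    rw [← hps, Finset.prod_const]
    exact pow_le_one₀
      (Finset.sum_nonneg fun i _ => div_nonneg (by positivity) (RKaux.frobSq_nonneg (A + E)))
      (RKaux.psum_le_one (A + E) hrow)
  have hbeq : (fun j => mulVecE A xLS j + ε j)
      = (fun j => mulVecE (A + E) xPNLS j + ε j) := by
    funext j; rw [hPNLS]
  have he0mem : x0 - xPNLS ∈ rowSpace (A + E) := Submodule.sub_mem _ hx0 hxPNLS
  have hiter := RKaux.rk_iter_sq (A + E) hrow σt hσt0 hσtA xPNLS (fun j => ε j) k x0 he0mem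
  set B := Real.sqrt ((1 - σt ^ 2 / frobSq (A + E)) ^ k) * ‖x0 - xPNLS‖ + ‖ε‖ / σt with hB
  have hBnn : 0 ≤ B := by positivity
  -- geometric-sum noise bound
  have hGc : (∑ j ∈ Finset.range k, (1 - σt ^ 2 / frobSq (A + E)) ^ j)
      * ((∑ i, (ε i) ^ 2) / frobSq (A + E)) ≤ (‖ε‖ / σt) ^ 2 := by
    rcases isEmpty_or_nonempty (Fin m) with hm | hm
    · have h0 : (∑ i, (ε i) ^ 2) = 0 := by
        rw [Finset.univ_eq_empty, Finset.sum_empty]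
      rw [h0, zero_div, mul_zero]
      positivity
    · obtain ⟨i0⟩ := hm
      have hmpos : 0 < m := i0.pos
      have hF := RKaux.frobSq_pos (A + E) hrow hmpos
      set G := ∑ j ∈ Finset.range k, (1 - σt ^ 2 / frobSq (A + E)) ^ j with hGdef
      have hG0 : 0 ≤ G := Finset.sum_nonneg fun j _ => pow_nonneg hα0 j
      have hG1 : G * (σt ^ 2 / frobSq (A + E)) ≤ 1 := by
        have hgs := geom_sum_mul (1 - σt ^ 2 / frobSq (A + E)) k
        have hαk : 0 ≤ (1 - σt ^ 2 / frobSq (A + E)) ^ k := pow_nonneg hα0 k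
        nlinarith [hgs]
      have hG2 : G * σt ^ 2 ≤ frobSq (A + E) := by
        rw [← mul_div_assoc] at hG1
        exact (div_le_one hF).mp hG1
      have hεsum : (∑ i, (ε i) ^ 2) = ‖ε‖ ^ 2 := (RKaux.norm_sq_eq ε).symm
      rw [hεsum, div_pow]
      have hσt2 : (0:ℝ) < σt ^ 2 := pow_pos hσt 2
      rw [le_div_iff₀ hσt2]
      have h3 : frobSq (A + E) * (‖ε‖ ^ 2 / frobSq (A + E)) = ‖ε‖ ^ 2 := by
        field_simp
      nlinarith [mul_le_mul_of_nonneg_right hG2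
        (div_nonneg (sq_nonneg ‖ε‖) (le_of_lt hF)), h3]
  have hsq : ∑ is : Fin k → Fin m,
      (∏ j, ‖_root_.row (A + E) (is j)‖ ^ 2 / frobSq (A + E)) *
        ‖kaczmarzIter (A + E) (fun j => mulVecE A xLS j + ε j) is x0 - xPNLS‖ ^ 2
      ≤ B ^ 2 := by
    rw [hbeq]
    refine le_trans hiter ?_
    rw [hB]
    have hs := Real.sq_sqrt (pow_nonneg hα0 k)
    nlinarith [Real.sqrt_nonneg ((1 - σt ^ 2 / frobSq (A + E)) ^ k),
      norm_nonneg (x0 - xPNLS), div_nonneg (norm_nonneg ε) hσt0, hGc,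
      mul_nonneg (mul_nonneg (Real.sqrt_nonneg ((1 - σt ^ 2 / frobSq (A + E)) ^ k))
        (norm_nonneg (x0 - xPNLS))) (div_nonneg (norm_nonneg ε) hσt0)]
  have hT1 : ∑ is : Fin k → Fin m,
      (∏ j, ‖_root_.row (A + E) (is j)‖ ^ 2 / frobSq (A + E)) *
        ‖kaczmarzIter (A + E) (fun j => mulVecE A xLS j + ε j) is x0 - xPNLS‖ ≤ B :=
    RKaux.jensen _ _ hPnn hP1 (fun is => norm_nonneg _) B hBnn hsq
  have htri : ∀ is : Fin k → Fin m,
      ‖kaczmarzIter (A + E) (fun j => mulVecE A xLS j + ε j) is x0 - xLS‖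
        ≤ ‖kaczmarzIter (A + E) (fun j => mulVecE A xLS j + ε j) is x0 - xPNLS‖
          + ‖xPNLS - xLS‖ := fun is =>
    norm_sub_le_norm_sub_add_norm_sub _ _ _
  calc ∑ is : Fin k → Fin m,
        (∏ j, ‖_root_.row (A + E) (is j)‖ ^ 2 / frobSq (A + E)) *
          ‖kaczmarzIter (A + E) (fun j => mulVecE A xLS j + ε j) is x0 - xLS‖
      ≤ ∑ is : Fin k → Fin m,
        (∏ j, ‖_root_.row (A + E) (is j)‖ ^ 2 / frobSq (A + E)) *
          (‖kaczmarzIter (A + E) (fun j => mulVecE A xLS j + ε j) is x0 - xPNLS‖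
            + ‖xPNLS - xLS‖) :=
        Finset.sum_le_sum fun is _ => mul_le_mul_of_nonneg_left (htri is) (hPnn is)
    _ = (∑ is : Fin k → Fin m,
          (∏ j, ‖_root_.row (A + E) (is j)‖ ^ 2 / frobSq (A + E)) *
            ‖kaczmarzIter (A + E) (fun j => mulVecE A xLS j + ε j) is x0 - xPNLS‖)
        + (∑ is : Fin k → Fin m,
            (∏ j, ‖_root_.row (A + E) (is j)‖ ^ 2 / frobSq (A + E))) * ‖xPNLS - xLS‖ := by
        rw [Finset.sum_mul, ← Finset.sum_add_distrib]
        exact Finset.sum_congr rfl fun is _ => by ring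
    _ ≤ B + 1 * ‖xPNLS - xLS‖ :=
        add_le_add hT1 (mul_le_mul_of_nonneg_right hP1 (norm_nonneg _))
    _ ≤ Real.sqrt ((1 - σt ^ 2 / frobSq (A + E)) ^ k) * ‖x0 - xPNLS‖
        + 2 * ‖xLS‖ * (specNorm E / σ) / (1 - specNorm E / σ) + ‖ε‖ / σt := by
        rw [hB, one_mul]
        linarith [hDb]
end
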